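/- arXiv:cs/0505022 — 4 statements merged into one kernel-verified Lean document; each statement's English description precedes it below -/
import Mathlib

section
/- Let N ≥ 1 be an integer, α ≠ 0 a real number, and Z₁, …, Z_N i.i.d. random variables with the semicircle density. Define the array factor F(α) = (1/N) Σ_{k=1}^N exp(−i α Z_k). Then the average beampattern satisfies E[|F(α)|²] = 1/N + (1 − 1/N)·(2 J₁(α)/α)². -/
open MeasureTheory ProbabilityTheory Real Filter

/-- Bessel function of the first kind of integer order `n`:
`Jₙ(x) = (1/π) ∫₀^π cos(nθ − x sin θ) dθ`. -/
noncomputable def besselJ (n : ℕ) (x : ℝ) : ℝ :=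
  (1 / π) * ∫ θ in (0:ℝ)..π, Real.cos (n * θ - x * Real.sin θ)

/-- The semicircle probability measure on ℝ, with density `(2/π)√(1 − z²)` on `[−1,1]`. -/
noncomputable def semicircleMeasure : Measure ℝ :=
  volume.withDensity (fun z => ENNReal.ofReal
    (if z ∈ Set.Icc (-1 : ℝ) 1 then (2 / π) * Real.sqrt (1 - z ^ 2) else 0))

-- Step 1: IBP
lemma step1 (α : ℝ) :
    ∫ θ in (0:ℝ)..π, (1 - α * Real.cos θ) * Real.cos (θ - α * Real.sin θ) = 0 := by
  have h : ∀ θ ∈ Set.uIcc (0:ℝ) π, HasDerivAt (fun θ => Real.sin (θ - α * Real.sin θ))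
      ((1 - α * Real.cos θ) * Real.cos (θ - α * Real.sin θ)) θ := by
    intro θ _
    have h1 : HasDerivAt (fun θ : ℝ => θ - α * Real.sin θ) (1 - α * Real.cos θ) θ :=
      (hasDerivAt_id θ).sub ((Real.hasDerivAt_sin θ).const_mul α)
    simpa [mul_comm, Function.comp_def] using (Real.hasDerivAt_sin _).comp θ h1
  have := intervalIntegral.integral_eq_sub_of_hasDerivAt h ?_
  · simpa using this
  · apply Continuous.intervalIntegrable
    continuity

-- odd part vanishes
lemma step2 (α : ℝ) :
    ∫ θ in (0:ℝ)..π, Real.cos θ * Real.sin θ * Real.sin (α * Real.sin θ) = 0 := by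
  set f : ℝ → ℝ := fun θ => Real.cos θ * Real.sin θ * Real.sin (α * Real.sin θ) with hf
  have h1 : (∫ x in (0:ℝ)..π, f (π - x)) = ∫ x in (0:ℝ)..π, f x := by
    simpa using intervalIntegral.integral_comp_sub_left f π
  have h2 : (∫ x in (0:ℝ)..π, f (π - x)) = -∫ x in (0:ℝ)..π, f x := by
    rw [← intervalIntegral.integral_neg]
    apply intervalIntegral.integral_congr
    intro x _
    simp [hf, Real.cos_pi_sub, Real.sin_pi_sub]
  linarith [h1, h2]

-- symmetry about π/2
lemma step3 (α : ℝ) :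
    ∫ θ in (0:ℝ)..π, Real.cos θ ^ 2 * Real.cos (α * Real.sin θ)
      = 2 * ∫ θ in (0:ℝ)..(π/2), Real.cos θ ^ 2 * Real.cos (α * Real.sin θ) := by
  set f : ℝ → ℝ := fun θ => Real.cos θ ^ 2 * Real.cos (α * Real.sin θ) with hf
  have h1 : (∫ x in (0:ℝ)..(π/2), f (π - x)) = ∫ x in (π/2)..π, f x := by
    have h := intervalIntegral.integral_comp_sub_left f π (a := 0) (b := π/2)
    rw [show π - π/2 = π/2 by ring, sub_zero] at h
    exact h
  have h2 : (∫ x in (0:ℝ)..(π/2), f (π - x)) = ∫ x in (0:ℝ)..(π/2), f x := by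
    apply intervalIntegral.integral_congr
    intro x _
    simp [hf, Real.cos_pi_sub, Real.sin_pi_sub]
  have h3 : (∫ x in (0:ℝ)..π, f x) = (∫ x in (0:ℝ)..(π/2), f x) + ∫ x in (π/2)..π, f x := by
    rw [intervalIntegral.integral_add_adjacent_intervals] <;>
      exact (by fun_prop : Continuous f).intervalIntegrable _ _
  rw [h3, ← h1, h2]; ring

-- substitution t = sin θ
lemma step4 (α : ℝ) :
    ∫ θ in (0:ℝ)..(π/2), Real.cos θ ^ 2 * Real.cos (α * Real.sin θ)
      = ∫ t in (0:ℝ)..1, Real.sqrt (1 - t ^ 2) * Real.cos (α * t) := by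
  have h := intervalIntegral.integral_comp_smul_deriv (a := (0:ℝ)) (b := π/2)
    (f := Real.sin) (f' := Real.cos) (g := fun t => Real.sqrt (1 - t ^ 2) * Real.cos (α * t))
    (fun x _ => Real.hasDerivAt_sin x) Real.continuous_cos.continuousOn
    (by fun_prop)
  rw [Real.sin_zero, Real.sin_pi_div_two] at h
  rw [← h]
  apply intervalIntegral.integral_congr
  intro x hx
  rw [Set.uIcc_of_le (by positivity)] at hx
  have hc : 0 ≤ Real.cos x := Real.cos_nonneg_of_mem_Icc ⟨by linarith [hx.1, Real.pi_pos], hx.2⟩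
  have : Real.sqrt (1 - Real.sin x ^ 2) = Real.cos x := by
    rw [show 1 - Real.sin x ^ 2 = Real.cos x ^ 2 by nlinarith [Real.sin_sq_add_cos_sq x]]
    exact Real.sqrt_sq hc
  simp [this, smul_eq_mul]
  ring

-- evenness
lemma step5 (α : ℝ) :
    ∫ t in (-1:ℝ)..1, Real.sqrt (1 - t ^ 2) * Real.cos (α * t)
      = 2 * ∫ t in (0:ℝ)..1, Real.sqrt (1 - t ^ 2) * Real.cos (α * t) := by
  set f : ℝ → ℝ := fun t => Real.sqrt (1 - t ^ 2) * Real.cos (α * t) with hf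
  have h1 : (∫ x in (0:ℝ)..1, f (-x)) = ∫ x in (-1:ℝ)..0, f x := by
    simpa using intervalIntegral.integral_comp_neg f (a := 0) (b := 1)
  have h2 : (∫ x in (0:ℝ)..1, f (-x)) = ∫ x in (0:ℝ)..1, f x := by
    apply intervalIntegral.integral_congr
    intro x _
    simp [hf, Real.cos_neg, mul_comm]
  have h3 : (∫ x in (-1:ℝ)..1, f x) = (∫ x in (-1:ℝ)..0, f x) + ∫ x in (0:ℝ)..1, f x := by
    rw [intervalIntegral.integral_add_adjacent_intervals] <;>
      exact (by fun_prop : Continuous f).intervalIntegrable _ _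
  rw [h3, ← h1, h2]; ring

lemma poisson (α : ℝ) :
    π * besselJ 1 α = α * ∫ t in (-1:ℝ)..1, Real.sqrt (1 - t ^ 2) * Real.cos (α * t) := by
  have hJ : π * besselJ 1 α = ∫ θ in (0:ℝ)..π, Real.cos (θ - α * Real.sin θ) := by
    rw [besselJ]
    rw [← mul_assoc, mul_one_div, div_self Real.pi_ne_zero, one_mul]
    norm_num
  have h1 := step1 α
  have hsplit : ∫ θ in (0:ℝ)..π, (1 - α * Real.cos θ) * Real.cos (θ - α * Real.sin θ)
      = (∫ θ in (0:ℝ)..π, Real.cos (θ - α * Real.sin θ))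
        - α * ∫ θ in (0:ℝ)..π, Real.cos θ * Real.cos (θ - α * Real.sin θ) := by
    rw [← intervalIntegral.integral_const_mul, ← intervalIntegral.integral_sub]
    · apply intervalIntegral.integral_congr; intro x _; ring
    · exact (by fun_prop : Continuous fun θ => Real.cos (θ - α * Real.sin θ)).intervalIntegrable _ _
    · exact (by fun_prop : Continuous fun θ => α * (Real.cos θ * Real.cos (θ - α * Real.sin θ))).intervalIntegrable _ _
  have hexp : ∫ θ in (0:ℝ)..π, Real.cos θ * Real.cos (θ - α * Real.sin θ)
      = (∫ θ in (0:ℝ)..π, Real.cos θ ^ 2 * Real.cos (α * Real.sin θ))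
        + ∫ θ in (0:ℝ)..π, Real.cos θ * Real.sin θ * Real.sin (α * Real.sin θ) := by
    rw [← intervalIntegral.integral_add]
    · apply intervalIntegral.integral_congr; intro x _
      simp only [Real.cos_sub]; ring
    · exact (by fun_prop : Continuous fun θ => Real.cos θ ^ 2 * Real.cos (α * Real.sin θ)).intervalIntegrable _ _
    · exact (by fun_prop : Continuous fun θ => Real.cos θ * Real.sin θ * Real.sin (α * Real.sin θ)).intervalIntegrable _ _
  rw [hJ]
  rw [hsplit, hexp, step2 α, step3 α, step4 α] at h1
  rw [step5 α]
  linarith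

lemma semi_integral (g : ℝ → ℝ) (hg : Continuous g) :
    ∫ z, g z ∂semicircleMeasure
      = (2 / π) * ∫ z in (-1:ℝ)..1, Real.sqrt (1 - z ^ 2) * g z := by
  set d : ℝ → ℝ := fun z => if z ∈ Set.Icc (-1 : ℝ) 1 then (2 / π) * Real.sqrt (1 - z ^ 2) else 0
    with hd
  have hdnn : ∀ z, 0 ≤ d z := by
    intro z
    simp only [hd]
    split_ifs
    · positivity
    · exact le_rfl
  have hdm : Measurable d := by
    apply Measurable.ite measurableSet_Icc
    · fun_prop
    · exact measurable_const
  have h1 : semicircleMeasure = volume.withDensity (fun z => ((d z).toNNReal : ENNReal)) := rfl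
  rw [h1, integral_withDensity_eq_integral_smul (hdm.real_toNNReal)]
  have h2 : (fun z => (d z).toNNReal • g z)
      = Set.indicator (Set.Icc (-1:ℝ) 1) (fun z => (2 / π) * Real.sqrt (1 - z ^ 2) * g z) := by
    funext z
    simp only [NNReal.smul_def, smul_eq_mul, Real.coe_toNNReal _ (hdnn z), hd,
      Set.indicator_apply]
    split_ifs
    · rw [Real.coe_toNNReal _ (by positivity)]
    · simp
  rw [h2, MeasureTheory.integral_indicator measurableSet_Icc, integral_Icc_eq_integral_Ioc,
    ← intervalIntegral.integral_of_le (by norm_num : (-1:ℝ) ≤ 1),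
    ← intervalIntegral.integral_const_mul]
  apply intervalIntegral.integral_congr
  intro x _; ring

lemma semi_one : ∫ z, (1:ℝ) ∂semicircleMeasure = 1 := by
  rw [semi_integral _ continuous_const]
  simp only [mul_one]
  rw [integral_sqrt_one_sub_sq]
  field_simp

lemma semi_cos (α : ℝ) (hα : α ≠ 0) :
    ∫ z, Real.cos (α * z) ∂semicircleMeasure = 2 * besselJ 1 α / α := by
  rw [semi_integral _ (by fun_prop)]
  have h := poisson α
  have : ∫ t in (-1:ℝ)..1, Real.sqrt (1 - t ^ 2) * Real.cos (α * t) = π * besselJ 1 α / α := by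
    field_simp at h ⊢; linarith
  rw [this]
  field_simp

lemma semi_sin (α : ℝ) : ∫ z, Real.sin (α * z) ∂semicircleMeasure = 0 := by
  rw [semi_integral _ (by fun_prop)]
  set f : ℝ → ℝ := fun t => Real.sqrt (1 - t ^ 2) * Real.sin (α * t) with hf
  have h1 : (∫ x in (0:ℝ)..1, f (-x)) = ∫ x in (-1:ℝ)..0, f x := by
    simpa using intervalIntegral.integral_comp_neg f (a := 0) (b := 1)
  have h2 : (∫ x in (0:ℝ)..1, f (-x)) = -∫ x in (0:ℝ)..1, f x := by
    rw [← intervalIntegral.integral_neg]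
    apply intervalIntegral.integral_congr
    intro x _
    simp [hf, mul_comm]
  have h3 : (∫ x in (-1:ℝ)..1, f x) = (∫ x in (-1:ℝ)..0, f x) + ∫ x in (0:ℝ)..1, f x := by
    rw [intervalIntegral.integral_add_adjacent_intervals] <;>
      exact (by fun_prop : Continuous f).intervalIntegrable _ _
  have : (∫ x in (-1:ℝ)..1, f x) = 0 := by rw [h3, ← h1, h2]; ring
  rw [this, mul_zero]

lemma pointwise_abs (N : ℕ) (α : ℝ) (s : Fin N → ℝ) :
    ‖(1 / N : ℂ) * ∑ k : Fin N, Complex.exp (-(Complex.I * α * s k))‖ ^ 2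
      = (1 / (N:ℝ)^2) * ∑ j : Fin N, ∑ k : Fin N,
          (Real.cos (α * s j) * Real.cos (α * s k)
            + Real.sin (α * s j) * Real.sin (α * s k)) := by
  set A : ℝ := ∑ k : Fin N, Real.cos (α * s k) with hA
  set B : ℝ := ∑ k : Fin N, Real.sin (α * s k) with hB
  have hterm : ∀ k : Fin N, Complex.exp (-(Complex.I * α * s k))
      = ((Real.cos (α * s k) : ℝ) : ℂ) + ((-Real.sin (α * s k) : ℝ) : ℂ) * Complex.I := by
    intro k
    rw [show -(Complex.I * α * s k) = ((-(α * s k) : ℝ) : ℂ) * Complex.I by push_cast; ring,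
      Complex.exp_mul_I]
    push_cast
    rw [Complex.cos_neg, Complex.sin_neg]

  have hsum : ∑ k : Fin N, Complex.exp (-(Complex.I * α * s k))
      = ((A : ℝ) : ℂ) + ((-B : ℝ) : ℂ) * Complex.I := by
    rw [Finset.sum_congr rfl (fun k _ => hterm k), Finset.sum_add_distrib, ← Finset.sum_mul]
    push_cast [hA, hB]
    rw [Finset.sum_neg_distrib]

  have hN : ((1 / N : ℂ)) = (((1 / N : ℝ)) : ℂ) := by push_cast; ring
  rw [hsum, hN,
    show (((1 / N : ℝ)) : ℂ) * (((A : ℝ) : ℂ) + ((-B : ℝ) : ℂ) * Complex.I)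
      = (((1/N * A : ℝ)) : ℂ) + (((1/N * (-B) : ℝ)) : ℂ) * Complex.I by push_cast; ring,
    Complex.sq_norm, Complex.normSq_add_mul_I]
  have hAA : A * A = ∑ j : Fin N, ∑ k : Fin N, Real.cos (α * s j) * Real.cos (α * s k) := by
    rw [hA, Finset.sum_mul_sum]
  have hBB : B * B = ∑ j : Fin N, ∑ k : Fin N, Real.sin (α * s j) * Real.sin (α * s k) := by
    rw [hB, Finset.sum_mul_sum]
  have hsplit : ∑ j : Fin N, ∑ k : Fin N,
      (Real.cos (α * s j) * Real.cos (α * s k) + Real.sin (α * s j) * Real.sin (α * s k))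
      = (∑ j : Fin N, ∑ k : Fin N, Real.cos (α * s j) * Real.cos (α * s k))
        + ∑ j : Fin N, ∑ k : Fin N, Real.sin (α * s j) * Real.sin (α * s k) := by
    simp [Finset.sum_add_distrib]
  rw [hsplit, ← hAA, ← hBB]
  ring


/-- For `N ≥ 1`, `α ≠ 0` and i.i.d. semicircle random variables `Z₁,…,Z_N`,
the array factor `F(α) = (1/N) Σₖ exp(−iαZₖ)` satisfies
`E[|F(α)|²] = 1/N + (1 − 1/N)(2J₁(α)/α)²`. -/
theorem average_beampattern {Ω : Type*} [MeasurableSpace Ω]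
    (μ : Measure Ω) [IsProbabilityMeasure μ]
    (N : ℕ) (hN : 1 ≤ N) (α : ℝ) (hα : α ≠ 0)
    (Z : Fin N → Ω → ℝ) (hmZ : ∀ k, Measurable (Z k))
    (hindep : iIndepFun Z μ)
    (hdist : ∀ k, Measure.map (Z k) μ = semicircleMeasure) :
    ∫ ω, ‖(1 / N : ℂ) * ∑ k : Fin N,
        Complex.exp (-(Complex.I * α * Z k ω))‖ ^ 2 ∂μ
      = 1 / N + (1 - 1 / N) * (2 * besselJ 1 α / α) ^ 2 := by
  have hNR : (N:ℝ) ≠ 0 := Nat.cast_ne_zero.mpr (by omega)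
  set c : ℝ := 2 * besselJ 1 α / α with hc
  set Cf : Fin N → Ω → ℝ := fun k ω => Real.cos (α * Z k ω) with hCf
  set Sf : Fin N → Ω → ℝ := fun k ω => Real.sin (α * Z k ω) with hSf
  have hmC : ∀ k, Measurable (Cf k) := fun k => by
    simp only [hCf]; fun_prop
  have hmS : ∀ k, Measurable (Sf k) := fun k => by
    simp only [hSf]; fun_prop
  have hbC : ∀ k ω, |Cf k ω| ≤ 1 := fun k ω => Real.abs_cos_le_one _
  have hbS : ∀ k ω, |Sf k ω| ≤ 1 := fun k ω => Real.abs_sin_le_one _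
  have hint : ∀ (f : Ω → ℝ), Measurable f → (∀ ω, |f ω| ≤ 1) → MeasureTheory.Integrable f μ :=
    fun f hm hb => (MeasureTheory.integrable_const 1).mono' hm.aestronglyMeasurable
      (Filter.Eventually.of_forall fun ω => by simpa using hb ω)
  have hintmul : ∀ (f g : Ω → ℝ), Measurable f → Measurable g → (∀ ω, |f ω| ≤ 1) →
      (∀ ω, |g ω| ≤ 1) → MeasureTheory.Integrable (fun ω => f ω * g ω) μ := by
    intro f g hf hg hbf hbg
    apply hint _ (hf.mul hg)
    intro ω
    rw [Pi.mul_apply, abs_mul]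
    exact mul_le_one₀ (hbf ω) (abs_nonneg _) (hbg ω)
  have hEC : ∀ k, ∫ ω, Cf k ω ∂μ = c := by
    intro k
    have h := MeasureTheory.integral_map (μ := μ) (φ := Z k) (f := fun z => Real.cos (α * z))
      (hmZ k).aemeasurable (Continuous.aestronglyMeasurable (by fun_prop))
    rw [hdist k, semi_cos α hα] at h
    rw [hCf, ← h]
  have hES : ∀ k, ∫ ω, Sf k ω ∂μ = 0 := by
    intro k
    have h := MeasureTheory.integral_map (μ := μ) (φ := Z k) (f := fun z => Real.sin (α * z))
      (hmZ k).aemeasurable (Continuous.aestronglyMeasurable (by fun_prop))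
    rw [hdist k, semi_sin α] at h
    rw [hSf, ← h]
  have hT : ∀ j k : Fin N, ∫ ω, (Cf j ω * Cf k ω + Sf j ω * Sf k ω) ∂μ
      = if j = k then (1:ℝ) else c^2 := by
    intro j k
    by_cases hjk : j = k
    · subst hjk
      rw [if_pos rfl]
      have hone : ∀ ω, Cf j ω * Cf j ω + Sf j ω * Sf j ω = 1 := fun ω => by
        simp only [hCf, hSf]
        nlinarith [Real.sin_sq_add_cos_sq (α * Z j ω)]
      calc ∫ ω, (Cf j ω * Cf j ω + Sf j ω * Sf j ω) ∂μ = ∫ _, (1:ℝ) ∂μ := by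
            apply MeasureTheory.integral_congr_ae
            filter_upwards with ω using hone ω
        _ = 1 := by simp
    · rw [if_neg hjk]
      have hmc : Measurable fun x : ℝ => Real.cos (α * x) := by fun_prop
      have hms : Measurable fun x : ℝ => Real.sin (α * x) := by fun_prop
      have hZjk := hindep.indepFun hjk
      have hiCC : ProbabilityTheory.IndepFun (Cf j) (Cf k) μ := hZjk.comp hmc hmc
      have hiSS : ProbabilityTheory.IndepFun (Sf j) (Sf k) μ := hZjk.comp hms hms
      have e1 : ∫ a, Cf j a * Cf k a ∂μ = (∫ a, Cf j a ∂μ) * ∫ a, Cf k a ∂μ :=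
        hiCC.integral_fun_mul_eq_mul_integral (hint _ (hmC j) (hbC j)).aestronglyMeasurable (hint _ (hmC k) (hbC k)).aestronglyMeasurable
      have e2 : ∫ a, Sf j a * Sf k a ∂μ = (∫ a, Sf j a ∂μ) * ∫ a, Sf k a ∂μ :=
        hiSS.integral_fun_mul_eq_mul_integral (hint _ (hmS j) (hbS j)).aestronglyMeasurable (hint _ (hmS k) (hbS k)).aestronglyMeasurable
      rw [MeasureTheory.integral_add
        (hintmul _ _ (hmC j) (hmC k) (hbC j) (hbC k))
        (hintmul _ _ (hmS j) (hmS k) (hbS j) (hbS k)),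
        e1, e2, hEC j, hEC k, hES j, hES k]
      ring
  have hpt : (fun ω => ‖(1 / N : ℂ) * ∑ k : Fin N,
        Complex.exp (-(Complex.I * α * Z k ω))‖ ^ 2)
      = fun ω => (1 / (N:ℝ)^2) * ∑ j : Fin N, ∑ k : Fin N,
          (Cf j ω * Cf k ω + Sf j ω * Sf k ω) :=
    funext fun ω => pointwise_abs N α (fun k => Z k ω)
  rw [hpt, MeasureTheory.integral_const_mul]
  have hout : ∫ a, ∑ j : Fin N, ∑ k : Fin N, (Cf j a * Cf k a + Sf j a * Sf k a) ∂μ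
      = ∑ j : Fin N, ∫ a, ∑ k : Fin N, (Cf j a * Cf k a + Sf j a * Sf k a) ∂μ :=
    MeasureTheory.integral_finset_sum _ (fun j _ => MeasureTheory.integrable_finset_sum _
      (fun k _ => ((hintmul _ _ (hmC j) (hmC k) (hbC j) (hbC k)).add
        (hintmul _ _ (hmS j) (hmS k) (hbS j) (hbS k)))))
  rw [hout]
  have hinner : ∀ j : Fin N, ∫ ω, ∑ k : Fin N, (Cf j ω * Cf k ω + Sf j ω * Sf k ω) ∂μ
      = (N : ℝ) * c^2 + (1 - c^2) := by
    intro j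
    have h1 : ∫ ω, ∑ k : Fin N, (Cf j ω * Cf k ω + Sf j ω * Sf k ω) ∂μ
        = ∑ k : Fin N, ∫ ω, (Cf j ω * Cf k ω + Sf j ω * Sf k ω) ∂μ :=
      MeasureTheory.integral_finset_sum _ (fun k _ =>
        ((hintmul _ _ (hmC j) (hmC k) (hbC j) (hbC k)).add
          (hintmul _ _ (hmS j) (hmS k) (hbS j) (hbS k))))
    rw [h1, Finset.sum_congr rfl (fun k _ => hT j k)]
    have hite : ∀ k : Fin N, (if j = k then (1:ℝ) else c^2)
        = c^2 + (if j = k then 1 - c^2 else 0) := fun k => by split_ifs <;> ring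
    rw [Finset.sum_congr rfl (fun k _ => hite k), Finset.sum_add_distrib,
      Finset.sum_const, Finset.sum_ite_eq, if_pos (Finset.mem_univ j)]
    simp [Finset.card_univ, nsmul_eq_mul]
  rw [Finset.sum_congr rfl (fun j _ => hinner j), Finset.sum_const, Finset.card_univ,
    Fintype.card_fin, nsmul_eq_mul]
  field_simp
  ring
end

section
/- Let N ≥ 1 be an integer, R̃ > 0, and Z₁, …, Z_N i.i.d. random variables with the semicircle density. Let S(x) = (1/π) ∫₀^π (2 J₁(x sin(θ/2)) / (x sin(θ/2)))² dθ. Then N / (1 + (N − 1) · S(4π R̃)) ≤ E[ (1/N + (1/N²) Σ_{k=1}^N Σ_{l=1, l≠k}^N J₀(4π R̃ (Z_k − Z_l)))^{−1} ]; that is, the average-beampattern directivity D̃_av is a lower bound on the average directivity D_av. -/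
open MeasureTheory ProbabilityTheory Real Filter intervalIntegral
open scoped ENNReal NNReal

/-- `S(x) = (1/π) ∫₀^π (2J₁(x sin(θ/2)) / (x sin(θ/2)))² dθ`. -/
noncomputable def sidelobeIntegral (x : ℝ) : ℝ :=
  (1 / π) * ∫ θ in (0:ℝ)..π,
    (2 * besselJ 1 (x * Real.sin (θ / 2)) / (x * Real.sin (θ / 2))) ^ 2




lemma besselJ_zero (x : ℝ) : besselJ 0 x = (1 / π) * ∫ θ in (0:ℝ)..π, Real.cos (x * Real.sin θ) := by
  unfold besselJ
  congr 1
  apply intervalIntegral.integral_congr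
  intro θ _
  simp [Real.cos_neg]

lemma besselJ_continuous (n : ℕ) : Continuous (besselJ n) := by
  unfold besselJ
  apply Continuous.mul continuous_const
  apply continuous_parametric_intervalIntegral_of_continuous'
  fun_prop

lemma abs_besselJ_le (n : ℕ) (x : ℝ) : |besselJ n x| ≤ 1 := by
  unfold besselJ
  rw [abs_mul]
  have h1 : |∫ θ in (0:ℝ)..π, Real.cos (n * θ - x * Real.sin θ)| ≤ 1 * |π - 0| := by
    rw [← Real.norm_eq_abs]
    apply intervalIntegral.norm_integral_le_of_norm_le_const
    intro θ _
    rw [Real.norm_eq_abs]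
    exact Real.abs_cos_le_one _
  have hπ : (0:ℝ) < π := Real.pi_pos
  calc |1/π| * |∫ θ in (0:ℝ)..π, Real.cos (n * θ - x * Real.sin θ)|
      ≤ |1/π| * (1 * |π - 0|) := by
        apply mul_le_mul_of_nonneg_left h1 (abs_nonneg _)
    _ = 1 := by rw [abs_of_pos (by positivity), sub_zero, abs_of_pos hπ]; field_simp

lemma besselJ_zero_zero : besselJ 0 0 = 1 := by
  rw [besselJ_zero]; simp

-- reflection: ∫₀^π f(π−θ)dθ = ∫₀^π f
lemma integral_reflect (f : ℝ → ℝ) :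
    (∫ θ in (0:ℝ)..π, f (π - θ)) = ∫ θ in (0:ℝ)..π, f θ := by
  simpa using intervalIntegral.integral_comp_sub_left f π

lemma cos_cos_integral_zero (t : ℝ) :
    ∫ θ in (0:ℝ)..π, Real.cos θ * Real.cos (t * Real.sin θ) = 0 := by
  have h := integral_reflect (fun θ => Real.cos θ * Real.cos (t * Real.sin θ))
  have h2 : (∫ θ in (0:ℝ)..π, Real.cos (π - θ) * Real.cos (t * Real.sin (π - θ)))
      = ∫ θ in (0:ℝ)..π, -(Real.cos θ * Real.cos (t * Real.sin θ)) := by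
    apply intervalIntegral.integral_congr
    intro θ _
    simp [Real.cos_pi_sub, Real.sin_pi_sub]
  rw [h2, intervalIntegral.integral_neg] at h
  linarith

lemma besselJ_one_eq (t : ℝ) :
    besselJ 1 t = (1 / π) * ∫ θ in (0:ℝ)..π, Real.sin θ * Real.sin (t * Real.sin θ) := by
  unfold besselJ
  congr 1
  have h1 : (∫ θ in (0:ℝ)..π, Real.cos ((1:ℕ) * θ - t * Real.sin θ))
      = ∫ θ in (0:ℝ)..π, (Real.cos θ * Real.cos (t * Real.sin θ) +
          Real.sin θ * Real.sin (t * Real.sin θ)) := by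
    apply intervalIntegral.integral_congr
    intro θ _
    simp [Real.cos_sub]
  rw [h1, intervalIntegral.integral_add, cos_cos_integral_zero, zero_add]
  · exact (Continuous.mul Real.continuous_cos (by fun_prop)).intervalIntegrable _ _
  · exact (Continuous.mul Real.continuous_sin (by fun_prop)).intervalIntegrable _ _

lemma half_reflect (f : ℝ → ℝ) (hc : Continuous f) (hf : ∀ θ, f (π - θ) = f θ) :
    (∫ θ in (0:ℝ)..π, f θ) = 2 * ∫ θ in (0:ℝ)..(π/2), f θ := by
  have hsplit : (∫ θ in (0:ℝ)..(π/2), f θ) + (∫ θ in (π/2:ℝ)..π, f θ)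
      = ∫ θ in (0:ℝ)..π, f θ :=
    intervalIntegral.integral_add_adjacent_intervals
      (hc.intervalIntegrable _ _) (hc.intervalIntegrable _ _)
  have h2 : (∫ θ in (π/2:ℝ)..π, f θ) = ∫ θ in (0:ℝ)..(π/2), f θ := by
    have := intervalIntegral.integral_comp_sub_left (a := 0) (b := π/2) f π
    have e1 : π - π/2 = π/2 := by ring
    have e2 : π - 0 = π := by ring
    rw [e1, e2] at this
    rw [← this]
    apply intervalIntegral.integral_congr
    intro θ _
    exact hf θ
  linarith

lemma even_reflect (f : ℝ → ℝ) (a : ℝ) (hc : Continuous f) (hf : ∀ θ, f (-θ) = f θ) :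
    (∫ θ in (-a:ℝ)..a, f θ) = 2 * ∫ θ in (0:ℝ)..a, f θ := by
  have hsplit : (∫ θ in (-a:ℝ)..0, f θ) + (∫ θ in (0:ℝ)..a, f θ)
      = ∫ θ in (-a:ℝ)..a, f θ :=
    intervalIntegral.integral_add_adjacent_intervals
      (hc.intervalIntegrable _ _) (hc.intervalIntegrable _ _)
  have h2 : (∫ θ in (-a:ℝ)..0, f θ) = ∫ θ in (0:ℝ)..a, f θ := by
    have := intervalIntegral.integral_comp_neg (a := 0) (b := a) f
    rw [neg_zero] at this
    rw [← this]
    apply intervalIntegral.integral_congr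
    intro θ _
    exact hf θ
  linarith

lemma step_iii (t : ℝ) :
    (∫ θ in (0:ℝ)..π, Real.cos θ * Real.sin (t * Real.cos θ))
      = ∫ θ in (0:ℝ)..π, Real.sin θ * Real.sin (t * Real.sin θ) := by
  have hshift := intervalIntegral.integral_comp_add_right
    (a := -(π/2)) (b := π/2) (fun θ => Real.cos θ * Real.sin (t * Real.cos θ)) (π/2)
  have e1 : -(π/2) + π/2 = 0 := by ring
  have e2 : π/2 + π/2 = π := by ring
  rw [e1, e2] at hshift
  have hcongr : (∫ x in (-(π/2):ℝ)..(π/2),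
      (fun θ => Real.cos θ * Real.sin (t * Real.cos θ)) (x + π/2))
      = ∫ x in (-(π/2):ℝ)..(π/2), Real.sin x * Real.sin (t * Real.sin x) := by
    apply intervalIntegral.integral_congr
    intro x _
    have h1 : Real.cos (x + π/2) = -Real.sin x := by
      rw [Real.cos_add, Real.cos_pi_div_two, Real.sin_pi_div_two]; ring
    simp only [h1]
    rw [mul_neg, Real.sin_neg]
    ring
  have heven := even_reflect (fun x => Real.sin x * Real.sin (t * Real.sin x)) (π/2)
    (by fun_prop) (fun θ => by simp [Real.sin_neg, mul_neg])
  have hhalf := half_reflect (fun x => Real.sin x * Real.sin (t * Real.sin x))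
    (by fun_prop) (fun θ => by simp [Real.sin_pi_sub])
  rw [← hshift, hcongr, heven, hhalf]

lemma step_ii (t : ℝ) :
    t * ∫ θ in (0:ℝ)..π, Real.sin θ ^ 2 * Real.cos (t * Real.cos θ)
      = ∫ θ in (0:ℝ)..π, Real.cos θ * Real.sin (t * Real.cos θ) := by
  have hparts := intervalIntegral.integral_mul_deriv_eq_deriv_mul
    (u := Real.sin) (u' := Real.cos)
    (v := fun θ => Real.sin (t * Real.cos θ))
    (v' := fun θ => Real.cos (t * Real.cos θ) * (t * -Real.sin θ))
    (a := 0) (b := π)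
    (fun x _ => Real.hasDerivAt_sin x)
    (fun x _ => by
      have h1 : HasDerivAt (fun θ : ℝ => t * Real.cos θ) (t * -Real.sin x) x :=
        (Real.hasDerivAt_cos x).const_mul t
      exact (Real.hasDerivAt_sin _).comp x h1)
    (Real.continuous_cos.intervalIntegrable _ _)
    ((by fun_prop : Continuous fun θ => Real.cos (t * Real.cos θ) * (t * -Real.sin θ)).intervalIntegrable _ _)
  simp only [Real.sin_pi, Real.sin_zero, zero_mul, sub_zero] at hparts
  have h1 : (∫ θ in (0:ℝ)..π, Real.sin θ * (Real.cos (t * Real.cos θ) * (t * -Real.sin θ)))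
      = -(t * ∫ θ in (0:ℝ)..π, Real.sin θ ^ 2 * Real.cos (t * Real.cos θ)) := by
    rw [← intervalIntegral.integral_const_mul, ← intervalIntegral.integral_neg]
    apply intervalIntegral.integral_congr
    intro θ _
    ring
  rw [h1] at hparts
  linarith [hparts]

lemma step_i (t : ℝ) :
    (∫ z in (-1:ℝ)..1, Real.sqrt (1 - z ^ 2) * Real.cos (t * z))
      = ∫ θ in (0:ℝ)..π, Real.sin θ ^ 2 * Real.cos (t * Real.cos θ) := by
  have hsub := intervalIntegral.integral_comp_smul_deriv
    (f := Real.cos) (f' := fun θ => -Real.sin θ)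
    (g := fun z => Real.sqrt (1 - z ^ 2) * Real.cos (t * z)) (a := 0) (b := π)
    (fun x _ => Real.hasDerivAt_cos x)
    (by fun_prop)
    (by fun_prop)
  rw [Real.cos_zero, Real.cos_pi] at hsub
  have h1 : (∫ x in (1:ℝ)..(-1), Real.sqrt (1 - x ^ 2) * Real.cos (t * x))
      = -∫ z in (-1:ℝ)..1, Real.sqrt (1 - z ^ 2) * Real.cos (t * z) :=
    intervalIntegral.integral_symm _ _
  rw [h1] at hsub
  have h2 : (∫ x in (0:ℝ)..π, (-Real.sin x) •
      ((fun z => Real.sqrt (1 - z ^ 2) * Real.cos (t * z)) ∘ Real.cos) x)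
      = ∫ θ in (0:ℝ)..π, -(Real.sin θ ^ 2 * Real.cos (t * Real.cos θ)) := by
    apply intervalIntegral.integral_congr
    intro θ hθ
    rw [Set.uIcc_of_le Real.pi_pos.le] at hθ
    have hs : Real.sin θ ≥ 0 := Real.sin_nonneg_of_nonneg_of_le_pi hθ.1 hθ.2
    have h3 : Real.sqrt (1 - Real.cos θ ^ 2) = Real.sin θ := by
      rw [show (1:ℝ) - Real.cos θ ^ 2 = Real.sin θ ^ 2 by
        have := Real.sin_sq_add_cos_sq θ; linarith]
      exact Real.sqrt_sq hs
    simp only [Function.comp_apply, smul_eq_mul, h3]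
    ring
  rw [h2, intervalIntegral.integral_neg] at hsub
  linarith

lemma besselJ_one_key (t : ℝ) :
    t * ∫ z in (-1:ℝ)..1, Real.sqrt (1 - z ^ 2) * Real.cos (t * z) = π * besselJ 1 t := by
  rw [step_i, step_ii, step_iii, besselJ_one_eq]
  rw [← mul_assoc, mul_one_div_cancel Real.pi_ne_zero, one_mul]



lemma semicircle_integral (f : ℝ → ℝ) :
    ∫ z, f z ∂semicircleMeasure
      = ∫ z in (-1:ℝ)..1, (2 / π) * Real.sqrt (1 - z ^ 2) * f z := by
  have hd : Measurable fun z : ℝ =>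
      (if z ∈ Set.Icc (-1:ℝ) 1 then (2/π) * Real.sqrt (1 - z^2) else 0).toNNReal := by
    apply Measurable.real_toNNReal
    apply Measurable.ite measurableSet_Icc <;> fun_prop
  have heq : semicircleMeasure = volume.withDensity
      (fun z => ((if z ∈ Set.Icc (-1:ℝ) 1 then (2/π) * Real.sqrt (1 - z^2) else 0).toNNReal
        : ℝ≥0∞)) := rfl
  rw [heq, integral_withDensity_eq_integral_smul hd]
  have h2 : (fun z => ((if z ∈ Set.Icc (-1:ℝ) 1 then (2/π) * Real.sqrt (1 - z^2) else 0).toNNReal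
        : ℝ≥0) • f z)
      = Set.indicator (Set.Icc (-1:ℝ) 1) (fun z => (2/π) * Real.sqrt (1 - z^2) * f z) := by
    funext z
    by_cases hz : z ∈ Set.Icc (-1:ℝ) 1
    · rw [Set.indicator_of_mem hz, if_pos hz, NNReal.smul_def, smul_eq_mul,
        Real.coe_toNNReal _ (by positivity)]
    · rw [Set.indicator_of_notMem hz, if_neg hz]
      simp
  rw [h2, MeasureTheory.integral_indicator measurableSet_Icc,
    integral_Icc_eq_integral_Ioc,
    ← intervalIntegral.integral_of_le (by norm_num : (-1:ℝ) ≤ 1)]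

lemma semicircle_compl : semicircleMeasure (Set.Icc (-1:ℝ) 1)ᶜ = 0 := by
  rw [semicircleMeasure, withDensity_apply _ (measurableSet_Icc.compl)]
  rw [setLIntegral_congr_fun measurableSet_Icc.compl
    (fun z hz => by
      simp only [Set.mem_compl_iff] at hz
      rw [if_neg hz, ENNReal.ofReal_zero])]
  simp

noncomputable def scCos (t : ℝ) : ℝ := ∫ z, Real.cos (t * z) ∂semicircleMeasure

lemma scCos_eq (t : ℝ) : scCos t
    = ∫ z in (-1:ℝ)..1, (2 / π) * Real.sqrt (1 - z ^ 2) * Real.cos (t * z) :=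
  semicircle_integral _

lemma scCos_continuous : Continuous scCos := by
  have : scCos = fun t => ∫ z in (-1:ℝ)..1, (2 / π) * Real.sqrt (1 - z ^ 2) * Real.cos (t * z) :=
    funext scCos_eq
  rw [this]
  apply intervalIntegral.continuous_parametric_intervalIntegral_of_continuous'
  fun_prop

lemma scCos_besselJ (t : ℝ) (ht : t ≠ 0) : scCos t = 2 * besselJ 1 t / t := by
  rw [scCos_eq]
  have h1 : (∫ z in (-1:ℝ)..1, (2 / π) * Real.sqrt (1 - z ^ 2) * Real.cos (t * z))
      = (2/π) * ∫ z in (-1:ℝ)..1, Real.sqrt (1 - z ^ 2) * Real.cos (t * z) := by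
    rw [← intervalIntegral.integral_const_mul]
    apply intervalIntegral.integral_congr
    intro z _; ring
  rw [h1]
  have hkey := besselJ_one_key t
  have hπ := Real.pi_ne_zero
  rw [eq_div_iff ht, mul_right_comm, mul_assoc, hkey]
  field_simp

lemma sidelobe_eq (c : ℝ) (hc : c ≠ 0) :
    sidelobeIntegral c = (1/π) * ∫ θ in (0:ℝ)..π, (scCos (c * Real.sin θ))^2 := by
  unfold sidelobeIntegral
  have h1 : (∫ θ in (0:ℝ)..π,
      (2 * besselJ 1 (c * Real.sin (θ / 2)) / (c * Real.sin (θ / 2))) ^ 2)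
      = ∫ θ in (0:ℝ)..π, (scCos (c * Real.sin (θ/2)))^2 := by
    apply intervalIntegral.integral_congr_ae
    apply ae_of_all
    intro θ hθ
    rw [Set.uIoc_of_le Real.pi_pos.le] at hθ
    have h0 : 0 < θ/2 := by linarith [hθ.1]
    have hlt : θ/2 < π := by linarith [hθ.2, Real.pi_pos]
    have hs : 0 < Real.sin (θ/2) := Real.sin_pos_of_pos_of_lt_pi h0 hlt
    rw [scCos_besselJ _ (by positivity)]
  rw [h1]
  have h2 := intervalIntegral.integral_comp_div (a := (0:ℝ)) (b := π)
    (c := (2:ℝ)) (f := fun x => (scCos (c * Real.sin x))^2) two_ne_zero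
  rw [zero_div] at h2
  have h3 := half_reflect (fun x => (scCos (c * Real.sin x))^2)
    ((scCos_continuous.comp (by fun_prop)).pow 2)
    (fun θ => by rw [Real.sin_pi_sub])
  rw [h2, h3]
  simp only [smul_eq_mul]

lemma odd_integral_zero (f : ℝ → ℝ) (a : ℝ) (hc : Continuous f) (hf : ∀ x, f (-x) = -f x) :
    (∫ x in (-a:ℝ)..a, f x) = 0 := by
  have hsplit : (∫ θ in (-a:ℝ)..0, f θ) + (∫ θ in (0:ℝ)..a, f θ)
      = ∫ θ in (-a:ℝ)..a, f θ :=
    intervalIntegral.integral_add_adjacent_intervals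
      (hc.intervalIntegrable _ _) (hc.intervalIntegrable _ _)
  have h2 : (∫ θ in (-a:ℝ)..0, f θ) = -∫ θ in (0:ℝ)..a, f θ := by
    have := intervalIntegral.integral_comp_neg (a := 0) (b := a) f
    rw [neg_zero] at this
    rw [← this, ← intervalIntegral.integral_neg]
    apply intervalIntegral.integral_congr
    intro θ _
    exact hf θ
  linarith

lemma semicircle_sin (t : ℝ) : ∫ z, Real.sin (t * z) ∂semicircleMeasure = 0 := by
  rw [semicircle_integral]
  apply odd_integral_zero _ 1 (by fun_prop)
  intro x
  simp [mul_neg, Real.sin_neg]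

lemma integrable_of_bdd {α : Type*} [MeasurableSpace α] {μ : Measure α} [IsFiniteMeasure μ]
    {f : α → ℝ} (hm : AEStronglyMeasurable f μ) (C : ℝ) (h : ∀ a, |f a| ≤ C) :
    Integrable f μ :=
  (integrable_const C).mono' hm (ae_of_all _ (fun a => by rw [Real.norm_eq_abs]; exact h a))

lemma abs_scCos_le (hprob : IsProbabilityMeasure semicircleMeasure) (t : ℝ) :
    |scCos t| ≤ 1 := by
  have h1 : ‖∫ z, Real.cos (t * z) ∂semicircleMeasure‖
      ≤ ∫ z, ‖Real.cos (t * z)‖ ∂semicircleMeasure := norm_integral_le_integral_norm _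
  have h2 : (∫ z, ‖Real.cos (t * z)‖ ∂semicircleMeasure)
      ≤ ∫ _z, (1:ℝ) ∂semicircleMeasure := by
    apply MeasureTheory.integral_mono
    · apply integrable_of_bdd ((Continuous.norm (by fun_prop)).aestronglyMeasurable) 1
      intro a; rw [Real.norm_eq_abs, abs_abs]; exact Real.abs_cos_le_one _
    · exact integrable_const 1
    · intro z; exact Real.abs_cos_le_one _
  rw [MeasureTheory.integral_const, probReal_univ, smul_eq_mul, one_mul] at h2
  calc |scCos t| = ‖∫ z, Real.cos (t * z) ∂semicircleMeasure‖ := rfl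
    _ ≤ 1 := h1.trans h2

lemma semicircle_cos_shift (hprob : IsProbabilityMeasure semicircleMeasure) (t z : ℝ) :
    ∫ w, Real.cos (t * z - t * w) ∂semicircleMeasure = Real.cos (t * z) * scCos t := by
  have h : (fun w => Real.cos (t * z - t * w))
      = fun w => Real.cos (t * z) * Real.cos (t * w) + Real.sin (t * z) * Real.sin (t * w) :=
    funext fun w => by rw [Real.cos_sub]
  rw [h, MeasureTheory.integral_add, MeasureTheory.integral_const_mul,
    MeasureTheory.integral_const_mul, semicircle_sin, mul_zero, add_zero]
  · rfl
  · apply integrable_of_bdd (Continuous.aestronglyMeasurable (by fun_prop)) 1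
    intro a
    rw [abs_mul]
    exact mul_le_one₀ (Real.abs_cos_le_one _) (abs_nonneg _) (Real.abs_cos_le_one _)
  · apply integrable_of_bdd (Continuous.aestronglyMeasurable (by fun_prop)) 1
    intro a
    rw [abs_mul]
    exact mul_le_one₀ (Real.abs_sin_le_one _) (abs_nonneg _) (Real.abs_sin_le_one _)

lemma doubleF (c : ℝ) (hc : c ≠ 0) (hprob : IsProbabilityMeasure semicircleMeasure) :
    (∫ z, ∫ w, besselJ 0 (c * (z - w)) ∂semicircleMeasure ∂semicircleMeasure)
      = sidelobeIntegral c := by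
  have inner_eq : ∀ z : ℝ, (∫ w, besselJ 0 (c * (z - w)) ∂semicircleMeasure)
      = (1/π) * ∫ θ in Set.Ioc (0:ℝ) π,
          Real.cos (c * Real.sin θ * z) * scCos (c * Real.sin θ) := by
    intro z
    have h0 : ∀ w : ℝ, besselJ 0 (c * (z - w))
        = (1/π) * ∫ θ in Set.Ioc (0:ℝ) π, Real.cos (c * (z - w) * Real.sin θ) := by
      intro w
      rw [besselJ_zero, intervalIntegral.integral_of_le Real.pi_pos.le]
    simp_rw [h0]
    rw [MeasureTheory.integral_const_mul]
    congr 1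
    have hint : Integrable (Function.uncurry fun w θ => Real.cos (c * (z - w) * Real.sin θ))
        (semicircleMeasure.prod (volume.restrict (Set.Ioc 0 π))) := by
      apply integrable_of_bdd (Continuous.aestronglyMeasurable ?_) 1
      · intro a; exact Real.abs_cos_le_one _
      · have : (Function.uncurry fun w θ => Real.cos (c * (z - w) * Real.sin θ))
            = fun p : ℝ × ℝ => Real.cos (c * (z - p.1) * Real.sin p.2) := rfl
        rw [this]; fun_prop
    rw [MeasureTheory.integral_integral_swap hint]
    apply MeasureTheory.integral_congr_ae
    apply ae_of_all
    intro θ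
    have harg : ∀ w : ℝ, c * (z - w) * Real.sin θ
        = (c * Real.sin θ) * z - (c * Real.sin θ) * w := fun w => by ring
    simp_rw [harg]
    exact semicircle_cos_shift hprob _ z
  simp_rw [inner_eq]
  rw [MeasureTheory.integral_const_mul]
  have hint2 : Integrable (Function.uncurry fun z θ =>
      Real.cos (c * Real.sin θ * z) * scCos (c * Real.sin θ))
      (semicircleMeasure.prod (volume.restrict (Set.Ioc 0 π))) := by
    apply integrable_of_bdd (Continuous.aestronglyMeasurable ?_) 1
    · intro a
      rw [Function.uncurry_apply_pair]  -- maybe not needed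
      rw [abs_mul]
      exact mul_le_one₀ (Real.abs_cos_le_one _) (abs_nonneg _) (abs_scCos_le hprob _)
    · have : (Function.uncurry fun z θ => Real.cos (c * Real.sin θ * z) * scCos (c * Real.sin θ))
          = fun p : ℝ × ℝ => Real.cos (c * Real.sin p.2 * p.1) * scCos (c * Real.sin p.2) := rfl
      rw [this]
      exact ((Real.continuous_cos.comp (by fun_prop)).mul
        (scCos_continuous.comp (by fun_prop)))
  rw [MeasureTheory.integral_integral_swap hint2]
  have h3 : (∫ θ in Set.Ioc (0:ℝ) π,
        ∫ z, Real.cos (c * Real.sin θ * z) * scCos (c * Real.sin θ) ∂semicircleMeasure)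
      = ∫ θ in Set.Ioc (0:ℝ) π, (scCos (c * Real.sin θ))^2 := by
    apply MeasureTheory.integral_congr_ae
    apply ae_of_all
    intro θ
    show (∫ z, Real.cos (c * Real.sin θ * z) * scCos (c * Real.sin θ) ∂semicircleMeasure)
      = (scCos (c * Real.sin θ))^2
    rw [MeasureTheory.integral_mul_const]
    rw [show ∫ z, Real.cos (c * Real.sin θ * z) ∂semicircleMeasure = scCos (c * Real.sin θ) from rfl]
    ring
  rw [h3, sidelobe_eq c hc]
  rw [intervalIntegral.integral_of_le Real.pi_pos.le]

lemma trig_id {ι : Type*} (s : Finset ι) (a : ι → ℝ) :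
    ∑ k ∈ s, ∑ l ∈ s, Real.cos (a k - a l)
      = (∑ k ∈ s, Real.cos (a k))^2 + (∑ k ∈ s, Real.sin (a k))^2 := by
  rw [sq, sq, Finset.sum_mul_sum, Finset.sum_mul_sum, ← Finset.sum_add_distrib]
  apply Finset.sum_congr rfl; intro k _
  rw [← Finset.sum_add_distrib]
  apply Finset.sum_congr rfl; intro l _
  rw [Real.cos_sub]

-- Q as a function of θ
lemma Q_nonneg {N : ℕ} (c : ℝ) (z : Fin N → ℝ) (θ : ℝ) :
    0 ≤ ∑ k : Fin N, ∑ l : Fin N, Real.cos (c * (z k - z l) * Real.sin θ) := by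
  have h : ∀ k l : Fin N, c * (z k - z l) * Real.sin θ
      = (c * Real.sin θ * z k) - (c * Real.sin θ * z l) := fun k l => by ring
  simp_rw [h]
  rw [trig_id]
  positivity

lemma Q_lower {N : ℕ} (c : ℝ) (hc : 0 < c) (z : Fin N → ℝ) (hz : ∀ k, |z k| ≤ 1)
    (θ : ℝ) (hθ0 : 0 ≤ θ) (hθ : θ ≤ 1 / c) :
    (N:ℝ)^2 / 4 ≤ ∑ k : Fin N, ∑ l : Fin N, Real.cos (c * (z k - z l) * Real.sin θ) := by
  have h : ∀ k l : Fin N, c * (z k - z l) * Real.sin θ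
      = (c * Real.sin θ * z k) - (c * Real.sin θ * z l) := fun k l => by ring
  simp_rw [h, trig_id]
  have hcos : ∀ k : Fin N, (1:ℝ)/2 ≤ Real.cos (c * Real.sin θ * z k) := by
    intro k
    have hb : |c * Real.sin θ * z k| ≤ 1 := by
      rw [abs_mul, abs_mul, abs_of_pos hc]
      have hsin : |Real.sin θ| ≤ θ := by
        calc |Real.sin θ| ≤ |θ| := Real.abs_sin_le_abs
          _ = θ := abs_of_nonneg hθ0
      have h1 : c * |Real.sin θ| ≤ c * θ := by
        exact mul_le_mul_of_nonneg_left hsin hc.le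
      have h2 : c * θ ≤ 1 := by
        rw [div_eq_mul_inv] at hθ
        calc c * θ ≤ c * (1/c) := by
              apply mul_le_mul_of_nonneg_left _ hc.le
              simpa [one_div] using hθ
          _ = 1 := by field_simp
      calc c * |Real.sin θ| * |z k| ≤ c * |Real.sin θ| * 1 := by
            apply mul_le_mul_of_nonneg_left (hz k) (by positivity)
        _ = c * |Real.sin θ| := by ring
        _ ≤ 1 := h1.trans h2
    calc (1:ℝ)/2 = 1 - 1^2/2 := by norm_num
      _ ≤ 1 - (c * Real.sin θ * z k)^2/2 := by
          have h4 := sq_abs (c * Real.sin θ * z k)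
          nlinarith [abs_nonneg (c * Real.sin θ * z k)]
      _ ≤ Real.cos _ := Real.one_sub_sq_div_two_le_cos
  have hsum : (N:ℝ)/2 ≤ ∑ k : Fin N, Real.cos (c * Real.sin θ * z k) := by
    calc (N:ℝ)/2 = ∑ _k : Fin N, (1:ℝ)/2 := by simp [Finset.sum_const]; ring
      _ ≤ _ := Finset.sum_le_sum (fun k _ => hcos k)
  have h2 : ((N:ℝ)/2)^2 ≤ (∑ k : Fin N, Real.cos (c * Real.sin θ * z k))^2 := by
    apply sq_le_sq' <;> nlinarith [Nat.cast_nonneg (α := ℝ) N]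
  nlinarith [sq_nonneg (∑ k : Fin N, Real.sin (c * Real.sin θ * z k))]


lemma X_repr {N : ℕ} (c : ℝ) (z : Fin N → ℝ) :
    ∑ k : Fin N, ∑ l : Fin N, besselJ 0 (c * (z k - z l))
      = (1/π) * ∫ θ in (0:ℝ)..π,
          ∑ k : Fin N, ∑ l : Fin N, Real.cos (c * (z k - z l) * Real.sin θ) := by
  simp_rw [besselJ_zero]
  have h1 : ∀ k : Fin N, ∑ l : Fin N,
      (1/π : ℝ) * ∫ θ in (0:ℝ)..π, Real.cos (c * (z k - z l) * Real.sin θ)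
      = (1/π : ℝ) * ∫ θ in (0:ℝ)..π, ∑ l : Fin N, Real.cos (c * (z k - z l) * Real.sin θ) := by
    intro k
    rw [← Finset.mul_sum, intervalIntegral.integral_finset_sum]
    intro l _
    exact (Continuous.intervalIntegrable (by fun_prop) _ _)
  simp_rw [h1]
  rw [← Finset.mul_sum, intervalIntegral.integral_finset_sum]
  intro k _
  apply Continuous.intervalIntegrable
  apply continuous_finset_sum
  intro l _
  fun_prop

lemma X_lower {N : ℕ} (c : ℝ) (hc : 0 < c) (z : Fin N → ℝ) (hz : ∀ k, |z k| ≤ 1) :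
    min π (1/c) * (N:ℝ)^2 / (4*π)
      ≤ ∑ k : Fin N, ∑ l : Fin N, besselJ 0 (c * (z k - z l)) := by
  set δ := min π (1/c) with hδ
  have hδ0 : 0 < δ := lt_min Real.pi_pos (by positivity)
  have hδπ : δ ≤ π := min_le_left _ _
  have hδc : δ ≤ 1/c := min_le_right _ _
  rw [X_repr]
  set Q : ℝ → ℝ := fun θ => ∑ k : Fin N, ∑ l : Fin N, Real.cos (c * (z k - z l) * Real.sin θ)
    with hQ
  have hQc : Continuous Q := by
    apply continuous_finset_sum; intro k _; apply continuous_finset_sum; intro l _; fun_prop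
  have hsplit : (∫ θ in (0:ℝ)..δ, Q θ) + (∫ θ in δ..π, Q θ) = ∫ θ in (0:ℝ)..π, Q θ :=
    intervalIntegral.integral_add_adjacent_intervals
      (hQc.intervalIntegrable _ _) (hQc.intervalIntegrable _ _)
  have h2 : (∫ θ in δ..π, Q θ) ≥ 0 := by
    apply intervalIntegral.integral_nonneg hδπ
    intro θ _
    exact Q_nonneg c z θ
  have h3 : δ * ((N:ℝ)^2/4) ≤ ∫ θ in (0:ℝ)..δ, Q θ := by
    have := intervalIntegral.integral_mono_on (a := 0) (b := δ) (f := fun _ => (N:ℝ)^2/4)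
      (g := Q) hδ0.le (intervalIntegrable_const (μ := volume)) (hQc.intervalIntegrable _ _)
      (fun θ hθ => Q_lower c hc z hz θ hθ.1 (hθ.2.trans hδc))
    rw [intervalIntegral.integral_const, smul_eq_mul, sub_zero] at this
    exact this
  have h4 : δ * ((N:ℝ)^2/4) ≤ ∫ θ in (0:ℝ)..π, Q θ := by linarith
  have hπ : (0:ℝ) < π := Real.pi_pos
  rw [ge_iff_le, ← hsplit] at *
  calc δ * (N:ℝ)^2 / (4*π) = (1/π) * (δ * ((N:ℝ)^2/4)) := by
        rw [div_eq_mul_inv, div_eq_mul_inv, mul_inv]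
        ring
    _ ≤ (1/π) * ((∫ θ in (0:ℝ)..δ, Q θ) + ∫ θ in δ..π, Q θ) := by
        apply mul_le_mul_of_nonneg_left _ (by positivity)
        linarith
    _ = _ := rfl

lemma X_upper {N : ℕ} (c : ℝ) (z : Fin N → ℝ) :
    ∑ k : Fin N, ∑ l : Fin N, besselJ 0 (c * (z k - z l)) ≤ (N:ℝ)^2 := by
  calc ∑ k : Fin N, ∑ l : Fin N, besselJ 0 (c * (z k - z l))
      ≤ ∑ _k : Fin N, ∑ _l : Fin N, (1:ℝ) := by
        apply Finset.sum_le_sum; intro k _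
        apply Finset.sum_le_sum; intro l _
        exact (abs_le.mp (abs_besselJ_le _ _)).2
    _ = (N:ℝ)^2 := by simp [Finset.sum_const]; ring


/-- The average-beampattern directivity `D̃_av = N/(1 + (N−1)S(4πR̃))` is a lower
bound on the average directivity `D_av = E[D(Z)]`, where
`D(z) = (1/N + (1/N²) Σ_{k≠l} J₀(4πR̃(zₖ−z_l)))⁻¹` and `Z₁,…,Z_N` are i.i.d. semicircle. -/
theorem average_directivity_lower_bound {Ω : Type*} [MeasurableSpace Ω]
    (μ : Measure Ω) [IsProbabilityMeasure μ]
    (N : ℕ) (hN : 1 ≤ N) (R : ℝ) (hR : 0 < R)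
    (Z : Fin N → Ω → ℝ) (hmZ : ∀ k, Measurable (Z k))
    (hindep : iIndepFun Z μ)
    (hdist : ∀ k, Measure.map (Z k) μ = semicircleMeasure) :
    (N : ℝ) / (1 + ((N : ℝ) - 1) * sidelobeIntegral (4 * π * R))
      ≤ ∫ ω, (1 / N + (1 / (N : ℝ) ^ 2) * ∑ k : Fin N, ∑ l ∈ Finset.univ.erase k,
          besselJ 0 (4 * π * R * (Z k ω - Z l ω)))⁻¹ ∂μ := by
  classical
  have hπ : (0:ℝ) < π := Real.pi_pos
  set c : ℝ := 4 * π * R with hc_def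
  have hc : 0 < c := by positivity
  have hNpos : (0:ℝ) < N := by exact_mod_cast hN
  have hprob : IsProbabilityMeasure semicircleMeasure := by
    rw [← hdist ⟨0, hN⟩]
    exact Measure.isProbabilityMeasure_map (hmZ _).aemeasurable
  set m : ℝ := min π (1/c) / (4 * π) with hm_def
  have hm : 0 < m := by
    apply div_pos (lt_min hπ (by positivity)) (by positivity)
  set X : Ω → ℝ := fun ω => (1/(N:ℝ)^2) * ∑ k : Fin N, ∑ l : Fin N,
      besselJ 0 (c * (Z k ω - Z l ω)) with hX
  -- the statement's integrand equals X⁻¹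
  have hEX : ∀ ω, (1 / (N:ℝ) + (1 / (N : ℝ) ^ 2) * ∑ k : Fin N, ∑ l ∈ Finset.univ.erase k,
      besselJ 0 (4 * π * R * (Z k ω - Z l ω))) = X ω := by
    intro ω
    rw [hX]
    have hdiag : ∀ k : Fin N, ∑ l : Fin N, besselJ 0 (c * (Z k ω - Z l ω))
        = 1 + ∑ l ∈ Finset.univ.erase k, besselJ 0 (c * (Z k ω - Z l ω)) := by
      intro k
      rw [← Finset.add_sum_erase _ _ (Finset.mem_univ k)]
      congr 1
      rw [sub_self, mul_zero, besselJ_zero_zero]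
    simp only [hdiag]
    rw [Finset.sum_add_distrib, Finset.sum_const, Finset.card_univ, Fintype.card_fin,
      nsmul_eq_mul, mul_one, mul_add]
    congr 1
    field_simp
  -- a.e. bounds on Z
  have hZae : ∀ᵐ ω ∂μ, ∀ k : Fin N, |Z k ω| ≤ 1 := by
    rw [ae_all_iff]
    intro k
    have h0 : μ (Z k ⁻¹' (Set.Icc (-1:ℝ) 1)ᶜ) = 0 := by
      rw [← Measure.map_apply (hmZ k) measurableSet_Icc.compl, hdist k]
      exact semicircle_compl
    filter_upwards [measure_eq_zero_iff_ae_notMem.mp h0] with ω hω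
    have : Z k ω ∈ Set.Icc (-1:ℝ) 1 := by
      by_contra h
      exact hω h
    rw [abs_le]
    exact ⟨this.1, this.2⟩
  -- measurability of X
  have hXm : Measurable X := by
    apply Measurable.const_mul
    apply Finset.measurable_sum
    intro k _
    apply Finset.measurable_sum
    intro l _
    exact (besselJ_continuous 0).measurable.comp (((hmZ k).sub (hmZ l)).const_mul c)
  -- a.e. membership in Icc m 1
  have hbound : ∀ᵐ ω ∂μ, X ω ∈ Set.Icc m 1 := by
    filter_upwards [hZae] with ω hω
    constructor
    · have := X_lower c hc (fun k => Z k ω) hω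
      calc m = (1/(N:ℝ)^2) * (min π (1/c) * (N:ℝ)^2 / (4*π)) := by
            rw [hm_def]; field_simp
        _ ≤ X ω := by
            rw [hX]
            apply mul_le_mul_of_nonneg_left this (by positivity)
    · have := X_upper c (fun k => Z k ω)
      calc X ω ≤ (1/(N:ℝ)^2) * (N:ℝ)^2 := by
            rw [hX]
            apply mul_le_mul_of_nonneg_left this (by positivity)
        _ = 1 := by field_simp
  -- integrability
  have hXabs : ∀ ω, |X ω| ≤ 1 := by
    intro ω
    rw [hX, abs_mul, abs_of_pos (show (0:ℝ) < 1/(N:ℝ)^2 by positivity)]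
    calc 1/(N:ℝ)^2 * |∑ k : Fin N, ∑ l : Fin N, besselJ 0 (c * (Z k ω - Z l ω))|
        ≤ 1/(N:ℝ)^2 * ∑ k : Fin N, ∑ l : Fin N, |besselJ 0 (c * (Z k ω - Z l ω))| := by
          apply mul_le_mul_of_nonneg_left _ (by positivity)
          calc |∑ k : Fin N, ∑ l : Fin N, besselJ 0 (c * (Z k ω - Z l ω))|
              ≤ ∑ k : Fin N, |∑ l : Fin N, besselJ 0 (c * (Z k ω - Z l ω))| :=
                Finset.abs_sum_le_sum_abs _ _
            _ ≤ _ := Finset.sum_le_sum (fun k _ => Finset.abs_sum_le_sum_abs _ _)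
      _ ≤ 1/(N:ℝ)^2 * ∑ _k : Fin N, ∑ _l : Fin N, (1:ℝ) := by
          apply mul_le_mul_of_nonneg_left _ (by positivity)
          exact Finset.sum_le_sum (fun k _ => Finset.sum_le_sum
            (fun l _ => abs_besselJ_le 0 _))
      _ = 1 := by simp [Finset.sum_const]; field_simp
  have hXint : Integrable X μ := integrable_of_bdd hXm.aestronglyMeasurable 1 hXabs
  have hXinvint : Integrable (fun ω => (X ω)⁻¹) μ := by
    apply (integrable_const m⁻¹).mono' hXm.inv.aestronglyMeasurable
    filter_upwards [hbound] with ω hω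
    rw [Real.norm_eq_abs, Pi.inv_apply, abs_inv, abs_of_pos (lt_of_lt_of_le hm hω.1)]
    exact inv_anti₀ hm hω.1
  -- Jensen
  have hconv : ConvexOn ℝ (Set.Icc m 1) fun x : ℝ => x⁻¹ := by
    have h1 := (convexOn_zpow (𝕜 := ℝ) (-1)).subset
      (fun x hx => lt_of_lt_of_le hm (Set.mem_Icc.mp hx).1) (convex_Icc m 1)
    have : (fun x : ℝ => x ^ (-1:ℤ)) = fun x : ℝ => x⁻¹ := by
      funext x; exact zpow_neg_one x
    rwa [this] at h1
  have hcont : ContinuousOn (fun x:ℝ => x⁻¹) (Set.Icc m 1) := by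
    apply ContinuousOn.inv₀ continuousOn_id
    intro x hx
    exact ne_of_gt (lt_of_lt_of_le hm hx.1)
  have hJensen : (∫ ω, X ω ∂μ)⁻¹ ≤ ∫ ω, (X ω)⁻¹ ∂μ :=
    hconv.map_integral_le hcont isClosed_Icc hbound hXint hXinvint
  -- expectation of X
  have hExp : ∀ k l : Fin N, k ≠ l →
      (∫ ω, besselJ 0 (c * (Z k ω - Z l ω)) ∂μ) = sidelobeIntegral c := by
    intro k l hkl
    have hind : IndepFun (Z k) (Z l) μ := hindep.indepFun hkl
    have hpair : Measure.map (fun ω => (Z k ω, Z l ω)) μ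
        = semicircleMeasure.prod semicircleMeasure := by
      rw [(indepFun_iff_map_prod_eq_prod_map_map (hmZ k).aemeasurable
        (hmZ l).aemeasurable).mp hind, hdist k, hdist l]
    have hmpair : Measurable (fun ω => (Z k ω, Z l ω)) := (hmZ k).prodMk (hmZ l)
    have h1 : (∫ ω, besselJ 0 (c * (Z k ω - Z l ω)) ∂μ)
        = ∫ p : ℝ × ℝ, besselJ 0 (c * (p.1 - p.2))
            ∂(semicircleMeasure.prod semicircleMeasure) := by
      rw [← hpair, integral_map hmpair.aemeasurable]
      exact (Continuous.aestronglyMeasurable (by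
        exact (besselJ_continuous 0).comp (by fun_prop)))
    rw [h1, MeasureTheory.integral_prod]
    · exact doubleF c (ne_of_gt hc) hprob
    · apply integrable_of_bdd (Continuous.aestronglyMeasurable
        ((besselJ_continuous 0).comp (by fun_prop))) 1
      intro p
      exact abs_besselJ_le 0 _
  have hIX : (∫ ω, X ω ∂μ) = (1 + ((N:ℝ)-1) * sidelobeIntegral c) / N := by
    rw [hX]
    rw [MeasureTheory.integral_const_mul]
    have hterm : ∀ (k l : Fin N), Integrable
        (fun ω => besselJ 0 (c * (Z k ω - Z l ω))) μ := by
      intro k l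
      apply integrable_of_bdd (Measurable.aestronglyMeasurable
        ((besselJ_continuous 0).measurable.comp (((hmZ k).sub (hmZ l)).const_mul c))) 1
      intro ω; exact abs_besselJ_le 0 _
    rw [MeasureTheory.integral_finset_sum _ (fun k _ => integrable_finset_sum _
      (fun l _ => hterm k l))]
    have h2 : ∀ k : Fin N, (∫ ω, ∑ l : Fin N, besselJ 0 (c * (Z k ω - Z l ω)) ∂μ)
        = 1 + ((N:ℝ)-1) * sidelobeIntegral c := by
      intro k
      rw [MeasureTheory.integral_finset_sum _ (fun l _ => hterm k l)]
      have h3 : ∀ l : Fin N, l ∈ Finset.univ.erase k →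
          (∫ ω, besselJ 0 (c * (Z k ω - Z l ω)) ∂μ) = sidelobeIntegral c := by
        intro l hl
        exact hExp k l (Finset.ne_of_mem_erase (Finset.mem_erase.mpr
          ⟨(Finset.mem_erase.mp hl).1, Finset.mem_univ _⟩)).symm
      rw [← Finset.add_sum_erase _ _ (Finset.mem_univ k)]
      have hself : (∫ ω, besselJ 0 (c * (Z k ω - Z k ω)) ∂μ) = 1 := by
        simp_rw [sub_self, mul_zero, besselJ_zero_zero]
        simp
      rw [hself, Finset.sum_congr rfl h3, Finset.sum_const,
        Finset.card_erase_of_mem (Finset.mem_univ k), Finset.card_univ, Fintype.card_fin,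
        nsmul_eq_mul, Nat.cast_sub hN, Nat.cast_one]
    rw [Finset.sum_congr rfl (fun k _ => h2 k), Finset.sum_const, Finset.card_univ,
      Fintype.card_fin, nsmul_eq_mul]
    field_simp
  -- final assembly
  have hIpos : (0:ℝ) < ∫ ω, X ω ∂μ := by
    have h5 : m ≤ ∫ ω, X ω ∂μ := by
      have := MeasureTheory.integral_mono_ae (integrable_const m) hXint
        (hbound.mono fun ω hω => hω.1)
      rwa [MeasureTheory.integral_const, probReal_univ, one_smul] at this
    linarith
  have hne : 1 + ((N:ℝ)-1) * sidelobeIntegral c > 0 := by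
    have : 1 + ((N:ℝ)-1) * sidelobeIntegral c = N * ∫ ω, X ω ∂μ := by
      rw [hIX]
      field_simp
    rw [this]
    positivity
  have hLHS : (N:ℝ) / (1 + ((N:ℝ)-1) * sidelobeIntegral c) = (∫ ω, X ω ∂μ)⁻¹ := by
    rw [hIX, inv_div]
  calc (N:ℝ) / (1 + ((N:ℝ)-1) * sidelobeIntegral c)
      = (∫ ω, X ω ∂μ)⁻¹ := hLHS
    _ ≤ ∫ ω, (X ω)⁻¹ ∂μ := hJensen
    _ = _ := by
        apply MeasureTheory.integral_congr_ae
        apply ae_of_all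
        intro ω
        exact congrArg Inv.inv (hEX ω).symm
end

section
/- For every real x, (1/π) ∫₀^π (2 J₁(x sin(θ/2)) / (x sin(θ/2)))² dθ = ₂F₃(1/2, 3/2; 1, 2, 3; −x²), where the right-hand side is the generalized hypergeometric series Σ_{n≥0} [(1/2)ₙ (3/2)ₙ / ((1)ₙ (2)ₙ (3)ₙ)] · (−x²)ⁿ / n! (with (a)ₙ the Pochhammer rising factorial); for x = 0 the integrand is interpreted by continuity as 1. -/
open MeasureTheory ProbabilityTheory Real Filter

/-- Pochhammer rising factorial `(a)ₙ = a(a+1)⋯(a+n−1)`. -/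
noncomputable def poch (a : ℝ) (n : ℕ) : ℝ := ∏ i ∈ Finset.range n, (a + i)

noncomputable def aJ (k : ℕ) : ℝ := (-1)^k / (4^k * k.factorial * (k+1).factorial)
noncomputable def cJ (n : ℕ) : ℝ := ∑ k ∈ Finset.range (n+1), aJ k * aJ (n-k)



lemma wallis_prod (n : ℕ) :
    ∏ i ∈ Finset.range n, (2*(i:ℝ)+1)/(2*(i:ℝ)+2) = (Nat.centralBinom n : ℝ) / 4^n := by
  induction n with
  | zero => simp [Nat.centralBinom]
  | succ k ih =>
    rw [Finset.prod_range_succ, ih]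
    have h' : ((k:ℝ)+1) * (Nat.centralBinom (k+1) : ℝ) = 2 * (2*(k:ℝ)+1) * (Nat.centralBinom k : ℝ) := by
      exact_mod_cast congrArg (Nat.cast : ℕ → ℝ) (Nat.succ_mul_centralBinom_succ k)
    rw [div_mul_div_comm, div_eq_div_iff (by positivity) (by positivity)]
    push_cast
    linear_combination (-2*(4:ℝ)^k) * h'

lemma integral_sin_pow_even' (n : ℕ) :
    ∫ θ in (0:ℝ)..π, Real.sin θ ^ (2*n) = π * ((Nat.centralBinom n : ℝ) / 4^n) := by
  rw [integral_sin_pow_even, wallis_prod]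

lemma integral_cos_mul_sin_pow (m : ℕ) :
    ∫ θ in (0:ℝ)..π, Real.cos θ * Real.sin θ ^ m = 0 := by
  have hd : ∀ θ ∈ Set.uIcc (0:ℝ) π, HasDerivAt (fun t => Real.sin t ^ (m+1) / (m+1))
      (Real.cos θ * Real.sin θ ^ m) θ := by
    intro θ _
    have h := ((Real.hasDerivAt_sin θ).pow (m+1)).div_const ((m:ℝ)+1)
    refine h.congr_deriv ?_
    have : ((m:ℝ)+1) ≠ 0 := by positivity
    rw [Nat.add_sub_cancel, Nat.cast_add_one, mul_assoc, mul_div_right_comm, div_self this, one_mul, mul_comm]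
  rw [intervalIntegral.integral_eq_sub_of_hasDerivAt hd
    ((continuous_cos.mul (continuous_sin.pow m)).intervalIntegrable 0 π)]
  simp [Real.sin_pi]



lemma abs_aJ (k : ℕ) : |aJ k| = 1 / (4^k * k.factorial * (k+1).factorial) := by
  rw [aJ, abs_div, abs_pow, abs_neg, abs_one, one_pow]
  congr 1
  rw [abs_of_pos]; positivity

lemma summable_aJ_abs (r : ℝ) : Summable (fun k => |aJ k| * r ^ (2*k)) := by
  refine Summable.of_nonneg_of_le (fun k => by rw [pow_mul]; positivity) (fun k => ?_)
    (Real.summable_pow_div_factorial (r^2/4))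
  have h1 : |aJ k| * r ^ (2*k) = (r^2)^k / (4^k * k.factorial * (k+1).factorial) := by
    rw [abs_aJ, pow_mul]; ring
  have h2 : (r^2/4)^k / (k.factorial : ℝ) = (r^2)^k / (4^k * k.factorial * 1) := by
    rw [div_pow]; ring
  rw [h1, h2]
  gcongr
  exact_mod_cast Nat.one_le_iff_ne_zero.2 (Nat.factorial_ne_zero _)

lemma summable_fJ (u : ℝ) : Summable (fun k => ‖aJ k * u^(2*k)‖) := by
  have : (fun k => ‖aJ k * u^(2*k)‖) = fun k => |aJ k| * |u|^(2*k) := by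
    funext k; rw [Real.norm_eq_abs, abs_mul, abs_pow]
  rw [this]; exact summable_aJ_abs |u|






lemma besselJ_one_eq_tsum (u : ℝ) :
    besselJ 1 u = ∑' k : ℕ, aJ k * u ^ (2*k+1) / 2 := by
  set g : ℕ → ℝ → ℝ := fun k θ =>
    ((-1)^k * u^(2*k) / (2*k).factorial) * (Real.cos θ * Real.sin θ ^ (2*k))
    + ((-1)^k * u^(2*k+1) / (2*k+1).factorial) * (Real.sin θ ^ (2*k+2)) with hg
  have hsum : ∀ θ : ℝ, HasSum (fun k => g k θ) (Real.cos (θ - u * Real.sin θ)) := by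
    intro θ
    have h3 := ((Real.hasSum_cos (u * Real.sin θ)).mul_right (Real.cos θ)).add
      ((Real.hasSum_sin (u * Real.sin θ)).mul_right (Real.sin θ))
    have he : (fun k => (-1:ℝ)^k * (u*Real.sin θ)^(2*k) / (2*k).factorial * Real.cos θ
        + (-1:ℝ)^k * (u*Real.sin θ)^(2*k+1) / (2*k+1).factorial * Real.sin θ) = fun k => g k θ := by
      funext k; rw [hg]; simp only [mul_pow]; ring
    rw [he] at h3
    rw [show Real.cos (θ - u * Real.sin θ) = Real.cos (u * Real.sin θ) * Real.cos θ + Real.sin (u * Real.sin θ) * Real.sin θ by rw [Real.cos_sub]; ring]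
    exact h3
  set C : ℕ → ℝ := fun k => |u|^(2*k)/(2*k).factorial + |u|^(2*k+1)/(2*k+1).factorial with hC
  have hCnonneg : ∀ k, 0 ≤ C k := fun k => by rw [hC]; positivity
  have hbound : ∀ k θ, ‖g k θ‖ ≤ C k := by
    intro k θ
    rw [hg, hC]
    refine (norm_add_le _ _).trans (add_le_add ?_ ?_)
    · rw [norm_mul, Real.norm_eq_abs, Real.norm_eq_abs, abs_div, abs_mul, abs_mul, abs_pow,
        abs_pow, abs_neg, abs_one, one_pow, one_mul, Nat.abs_cast]
      refine (mul_le_mul_of_nonneg_left ?_ (by positivity)).trans (le_of_eq (mul_one _))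
      rw [abs_pow]
      exact mul_le_one₀ (Real.abs_cos_le_one θ)
        (by positivity) (pow_le_one₀ (abs_nonneg _) (Real.abs_sin_le_one θ))
    · rw [norm_mul, Real.norm_eq_abs, Real.norm_eq_abs, abs_div, abs_mul, abs_pow,
        abs_pow, abs_neg, abs_one, one_pow, one_mul, Nat.abs_cast]
      refine (mul_le_mul_of_nonneg_left ?_ (by positivity)).trans (le_of_eq (mul_one _))
      rw [abs_pow]
      exact pow_le_one₀ (abs_nonneg _) (Real.abs_sin_le_one θ)
  have hsummC : Summable C := by
    apply Summable.add
    · exact (Real.summable_pow_div_factorial |u|).comp_injective (fun a b h => by omega)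
    · exact (Real.summable_pow_div_factorial |u|).comp_injective (fun a b h => by omega)
  have hmeas : ∀ k, AEStronglyMeasurable (g k) (volume.restrict (Set.Ioc (0:ℝ) π)) := by
    intro k; apply Continuous.aestronglyMeasurable; rw [hg]; fun_prop
  have hlint : ∑' k, ∫⁻ θ in Set.Ioc (0:ℝ) π, ‖g k θ‖₊ ≠ ⊤ := by
    have hb : ∀ k, ∫⁻ θ in Set.Ioc (0:ℝ) π, ‖g k θ‖₊ ≤ ENNReal.ofReal (C k * π) := by
      intro k
      calc ∫⁻ θ in Set.Ioc (0:ℝ) π, ‖g k θ‖₊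
          ≤ ∫⁻ _ in Set.Ioc (0:ℝ) π, ENNReal.ofReal (C k) := by
            refine lintegral_mono fun θ => ?_
            rw [← ENNReal.ofReal_coe_nnreal, coe_nnnorm]
            exact ENNReal.ofReal_le_ofReal (hbound k θ)
        _ = ENNReal.ofReal (C k) * ENNReal.ofReal π := by
            rw [lintegral_const, Measure.restrict_apply MeasurableSet.univ, Set.univ_inter,
              Real.volume_Ioc, sub_zero]
        _ = ENNReal.ofReal (C k * π) := (ENNReal.ofReal_mul (hCnonneg k)).symm
    refine ne_top_of_le_ne_top ?_ (ENNReal.tsum_le_tsum hb)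
    rw [← ENNReal.ofReal_tsum_of_nonneg (fun k => mul_nonneg (hCnonneg k) pi_pos.le)
      (hsummC.mul_right π)]
    exact ENNReal.ofReal_ne_top
  have hswap := MeasureTheory.integral_tsum hmeas hlint
  have hval : ∀ k : ℕ, (∫ θ in Set.Ioc (0:ℝ) π, g k θ) =
      ((-1)^k * u^(2*k+1) / (2*k+1).factorial) * (π * ((Nat.centralBinom (k+1) : ℝ) / 4^(k+1))) := by
    intro k
    rw [← intervalIntegral.integral_of_le pi_pos.le]
    rw [hg]
    beta_reduce
    rw [intervalIntegral.integral_add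
      (f := fun θ => (-1)^k * u^(2*k) / ((2*k).factorial : ℝ) * (Real.cos θ * Real.sin θ ^ (2*k)))
      (g := fun θ => (-1)^k * u^(2*k+1) / ((2*k+1).factorial : ℝ) * Real.sin θ ^ (2*k+2))
      (((continuous_const.mul ((continuous_cos.mul (continuous_sin.pow _))))).intervalIntegrable 0 π)
      ((continuous_const.mul (continuous_sin.pow _)).intervalIntegrable 0 π),
      intervalIntegral.integral_const_mul, intervalIntegral.integral_const_mul,
      integral_cos_mul_sin_pow, mul_zero, zero_add,
      show 2*k+2 = 2*(k+1) by ring, integral_sin_pow_even' (k+1)]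
  have hInt : besselJ 1 u
      = (1/π) * ∑' k : ℕ, ((-1)^k * u^(2*k+1) / (2*k+1).factorial)
          * (π * ((Nat.centralBinom (k+1) : ℝ) / 4^(k+1))) := by
    rw [besselJ, Nat.cast_one]
    congr 1
    rw [intervalIntegral.integral_of_le pi_pos.le]
    have : ∀ θ : ℝ, Real.cos (1 * θ - u * Real.sin θ) = ∑' k, g k θ := by
      intro θ; rw [one_mul]; exact ((hsum θ).tsum_eq).symm
    simp_rw [this]
    rw [hswap]
    exact tsum_congr hval
  rw [hInt]
  rw [← tsum_mul_left]
  refine tsum_congr fun k => ?_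
  -- termwise identity
  have hπ : (π:ℝ) ≠ 0 := pi_ne_zero
  have hCBcast : (Nat.centralBinom (k+1) : ℝ) * (k+1).factorial * (k+1).factorial
      = (2*k+2).factorial := by
    have := Nat.choose_mul_factorial_mul_factorial (show k+1 ≤ 2*(k+1) by omega)
    have h2 : 2*(k+1) - (k+1) = k+1 := by omega
    rw [h2] at this
    rw [Nat.centralBinom]
    exact_mod_cast congrArg (Nat.cast : ℕ → ℝ) (by rw [show 2*k+2 = 2*(k+1) by ring]; exact this)
  have h1 : ((2*k+2).factorial : ℝ) = (2*(k:ℝ)+2) * (2*k+1).factorial := by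
    rw [show 2*k+2 = (2*k+1)+1 by ring, Nat.factorial_succ]; push_cast; ring
  have h2 : ((k+1).factorial : ℝ) = ((k:ℝ)+1) * k.factorial := by
    rw [Nat.factorial_succ]; push_cast; ring
  have hkey : (Nat.centralBinom (k+1) : ℝ) * (k.factorial * (k+1).factorial)
      = 2 * (2*k+1).factorial := by
    have hk1 : ((k:ℝ)+1) ≠ 0 := by positivity
    apply mul_left_cancel₀ hk1
    linear_combination hCBcast + h1 - ((Nat.centralBinom (k+1) : ℝ) * (k+1).factorial) * h2
  rw [aJ]
  have hf1 : ((2*k+1).factorial : ℝ) ≠ 0 := Nat.cast_ne_zero.2 (Nat.factorial_ne_zero _)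
  have hf2 : (k.factorial : ℝ) ≠ 0 := Nat.cast_ne_zero.2 (Nat.factorial_ne_zero _)
  have hf3 : ((k+1).factorial : ℝ) ≠ 0 := Nat.cast_ne_zero.2 (Nat.factorial_ne_zero _)
  have h4 : (4:ℝ)^k ≠ 0 := by positivity
  field_simp
  linear_combination (u^(2*k+1) * 2 * 4^k) * hkey




lemma sum_range_aJ (u : ℝ) (n : ℕ) :
    ∑ k ∈ Finset.range (n+1), (aJ k * u^(2*k)) * (aJ (n-k) * u^(2*(n-k))) = cJ n * u^(2*n) := by
  rw [cJ, Finset.sum_mul]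
  refine Finset.sum_congr rfl fun k hk => ?_
  have hk' : k ≤ n := Nat.lt_succ_iff.mp (Finset.mem_range.mp hk)
  have hu : u^(2*k) * u^(2*(n-k)) = u^(2*n) := by
    rw [← pow_add]; congr 1; omega
  rw [mul_mul_mul_comm, hu]

lemma sq_eq_tsum (u : ℝ) :
    (∑' k : ℕ, aJ k * u ^ (2*k))^2 = ∑' n : ℕ, cJ n * u^(2*n) := by
  rw [sq, tsum_mul_tsum_eq_tsum_sum_range_of_summable_norm (summable_fJ u) (summable_fJ u)]
  exact tsum_congr fun n => sum_range_aJ u n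

lemma summable_cJ (x : ℝ) : Summable (fun n => |cJ n * x^(2*n)|) := by
  have h := summable_norm_sum_mul_range_of_summable_norm (summable_fJ x) (summable_fJ x)
  exact h.congr fun n => by rw [Real.norm_eq_abs, sum_range_aJ]

lemma integral_sin_half_pow (n : ℕ) :
    ∫ θ in (0:ℝ)..π, Real.sin (θ/2) ^ (2*n) = π * ((Nat.centralBinom n : ℝ) / 4^n) := by
  have hcomp := intervalIntegral.integral_comp_div (a:=(0:ℝ)) (b:=π) (c:=2)
    (f := fun t => Real.sin t ^ (2*n)) two_ne_zero
  rw [hcomp, zero_div, smul_eq_mul]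
  have hhalf : ∫ x in (0:ℝ)..(π/2), Real.sin x ^ (2*n) = ∫ x in (π/2)..π, Real.sin x ^(2*n) := by
    have h := intervalIntegral.integral_comp_sub_left (a:=(0:ℝ)) (b:=π/2)
      (fun x => Real.sin x ^ (2*n)) π
    rw [sub_zero] at h
    rw [show π - π/2 = π/2 by ring] at h
    rw [← h]
    refine intervalIntegral.integral_congr fun θ _ => ?_
    simp [Real.sin_pi_sub]
  have hadd : (∫ x in (0:ℝ)..(π/2), Real.sin x ^ (2*n)) + ∫ x in (π/2)..π, Real.sin x ^ (2*n)
      = ∫ x in (0:ℝ)..π, Real.sin x ^(2*n) :=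
    intervalIntegral.integral_add_adjacent_intervals
      ((continuous_sin.pow _).intervalIntegrable _ _)
      ((continuous_sin.pow _).intervalIntegrable _ _)
  rw [integral_sin_pow_even'] at hadd
  linarith [hhalf, hadd]

lemma poch_one (n : ℕ) : poch 1 n = n.factorial := by
  induction n with
  | zero => simp [poch]
  | succ k ih =>
    rw [poch, Finset.prod_range_succ, ← poch, ih, Nat.factorial_succ]; push_cast; ring

lemma poch_two (n : ℕ) : poch 2 n = (n+1).factorial := by
  induction n with
  | zero => simp [poch]
  | succ k ih =>
    have h : ((k+1+1).factorial : ℝ) = ((k:ℝ)+2) * (k+1).factorial := by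
      rw [Nat.factorial_succ]; push_cast; ring
    rw [poch, Finset.prod_range_succ, ← poch, ih, h]
    push_cast; ring

lemma poch_three (n : ℕ) : poch 3 n = (n+2).factorial / 2 := by
  induction n with
  | zero => simp [poch]
  | succ k ih =>
    have h : ((k+1+2).factorial : ℝ) = ((k:ℝ)+3) * (k+2).factorial := by
      rw [show k+1+2 = (k+2)+1 by omega, Nat.factorial_succ]; push_cast; ring
    rw [poch, Finset.prod_range_succ, ← poch, ih, h]
    push_cast; ring

lemma poch_half (n : ℕ) : poch (1/2) n = (2*n).factorial / (4^n * n.factorial) := by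
  induction n with
  | zero => simp [poch]
  | succ k ih =>
    rw [poch, Finset.prod_range_succ, ← poch, ih, show 2*(k+1) = (2*k+1)+1 by ring,
      Nat.factorial_succ, show (2*k+1) = (2*k)+1 by ring, Nat.factorial_succ,
      Nat.factorial_succ]
    have h1 : ((2*k).factorial : ℝ) ≠ 0 := Nat.cast_ne_zero.2 (Nat.factorial_ne_zero _)
    have h2 : (k.factorial : ℝ) ≠ 0 := Nat.cast_ne_zero.2 (Nat.factorial_ne_zero _)
    have h3 : (4:ℝ)^k ≠ 0 := by positivity
    field_simp
    push_cast
    ring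

lemma poch_threehalf (n : ℕ) : poch (3/2) n = (2*n+1).factorial / (4^n * n.factorial) := by
  induction n with
  | zero => simp [poch]
  | succ k ih =>
    have hA : ((2*(k+1)+1).factorial : ℝ) = (2*(k:ℝ)+3)*(2*(k:ℝ)+2)*(2*k+1).factorial := by
      rw [show 2*(k+1)+1 = ((2*k+1)+1)+1 by ring, Nat.factorial_succ, Nat.factorial_succ]
      push_cast; ring
    have hB : ((k+1).factorial : ℝ) = ((k:ℝ)+1)*k.factorial := by
      rw [Nat.factorial_succ]; push_cast; ring
    rw [poch, Finset.prod_range_succ, ← poch, ih, hA, hB]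
    have h1 : ((2*k+1).factorial : ℝ) ≠ 0 := Nat.cast_ne_zero.2 (Nat.factorial_ne_zero _)
    have h2 : (k.factorial : ℝ) ≠ 0 := Nat.cast_ne_zero.2 (Nat.factorial_ne_zero _)
    have h3 : (4:ℝ)^k ≠ 0 := by positivity
    field_simp
    ring

lemma vand (n : ℕ) :
    ∑ k ∈ Finset.range (n+1), n.choose k * (n+2).choose (n+1-k) = (2*n+2).choose (n+1) := by
  have h := Nat.add_choose_eq n (n+2) (n+1)
  rw [Finset.Nat.sum_antidiagonal_eq_sum_range_succ_mk] at h
  rw [Finset.sum_range_succ, Nat.choose_succ_self, zero_mul, add_zero,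
    show n + (n+2) = 2*n+2 by ring] at h
  exact h.symm

lemma cJ_eq (n : ℕ) :
    cJ n = (-1)^n * (((2*n+2).choose (n+1) : ℕ) : ℝ) / (4^n * n.factorial * (n+2).factorial) := by
  rw [cJ]
  have hterm : ∀ k ∈ Finset.range (n+1), aJ k * aJ (n-k)
      = (-1)^n * (((n.choose k : ℕ):ℝ) * (((n+2).choose (n+1-k) : ℕ):ℝ))
        / (4^n * n.factorial * (n+2).factorial) := by
    intro k hk
    have hkn : k ≤ n := Nat.lt_succ_iff.mp (Finset.mem_range.mp hk)
    obtain ⟨j, rfl⟩ : ∃ j, n = k + j := ⟨n - k, by omega⟩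
    rw [show k + j - k = j by omega, show k + j + 1 - k = j + 1 by omega]
    have hc1 : (((k+j).choose k : ℕ) : ℝ) * k.factorial * j.factorial = (k+j).factorial := by
      have := Nat.choose_mul_factorial_mul_factorial (Nat.le_add_right k j)
      rw [Nat.add_sub_cancel_left] at this
      exact_mod_cast this
    have hc2 : (((k+j+2).choose (j+1) : ℕ) : ℝ) * (j+1).factorial * (k+1).factorial
        = (k+j+2).factorial := by
      have h1 := Nat.choose_mul_factorial_mul_factorial (show j+1 ≤ k+j+2 by omega)
      rw [show k+j+2 - (j+1) = k+1 by omega] at h1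
      exact_mod_cast h1
    rw [aJ, aJ]
    have e1 : ((k.factorial : ℝ)) ≠ 0 := Nat.cast_ne_zero.2 (Nat.factorial_ne_zero _)
    have e2 : ((j.factorial : ℝ)) ≠ 0 := Nat.cast_ne_zero.2 (Nat.factorial_ne_zero _)
    have e3 : (((k+1).factorial : ℝ)) ≠ 0 := Nat.cast_ne_zero.2 (Nat.factorial_ne_zero _)
    have e4 : (((j+1).factorial : ℝ)) ≠ 0 := Nat.cast_ne_zero.2 (Nat.factorial_ne_zero _)
    have e5 : (((k+j).factorial : ℝ)) ≠ 0 := Nat.cast_ne_zero.2 (Nat.factorial_ne_zero _)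
    have e6 : (((k+j+2).factorial : ℝ)) ≠ 0 := Nat.cast_ne_zero.2 (Nat.factorial_ne_zero _)
    have e7 : (4:ℝ)^k ≠ 0 := by positivity
    have e8 : (4:ℝ)^j ≠ 0 := by positivity
    have e9 : (4:ℝ)^(k+j) ≠ 0 := by positivity
    have hAB : ((k+j).factorial:ℝ) * (k+j+2).factorial
        = (((k+j).choose k : ℕ):ℝ) * (((k+j+2).choose (j+1) : ℕ):ℝ)
          * (k.factorial * j.factorial * (k+1).factorial * (j+1).factorial) := by
      linear_combination (-((k+j+2).factorial:ℝ)) * hc1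
        - ((((k+j).choose k : ℕ):ℝ) * k.factorial * j.factorial) * hc2
    rw [pow_add (-1:ℝ) k j, pow_add (4:ℝ) k j, div_mul_div_comm,
      div_eq_div_iff (by positivity) (by positivity)]
    linear_combination ((-1:ℝ)^k * (-1)^j * 4^k * 4^j) * hAB
  rw [Finset.sum_congr rfl hterm, ← Finset.sum_div, ← Finset.mul_sum]
  congr 2
  exact_mod_cast congrArg (Nat.cast (R := ℝ)) (vand n)

lemma centralBinom_cast (n : ℕ) :
    (Nat.centralBinom n : ℝ) * n.factorial * n.factorial = (2*n).factorial := by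
  have := Nat.choose_mul_factorial_mul_factorial (show n ≤ 2*n by omega)
  rw [show 2*n - n = n by omega] at this
  rw [Nat.centralBinom]
  exact_mod_cast this

lemma key (n : ℕ) : cJ n * ((Nat.centralBinom n : ℝ) / 4^n)
    = (poch (1/2) n * poch (3/2) n / (poch 1 n * poch 2 n * poch 3 n)) * (-1)^n / n.factorial := by
  have hCB : (Nat.centralBinom n : ℝ) = (2*n).factorial / (n.factorial * n.factorial) := by
    rw [eq_div_iff (by positivity), ← mul_assoc, centralBinom_cast]
  have hch : (((2*n+2).choose (n+1) : ℕ) : ℝ)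
      = (2*n+2).factorial / ((n+1).factorial * (n+1).factorial) := by
    rw [eq_div_iff (by positivity)]
    have h1 := Nat.choose_mul_factorial_mul_factorial (show n+1 ≤ 2*n+2 by omega)
    rw [show 2*n+2 - (n+1) = n+1 by omega] at h1
    rw [← mul_assoc]
    exact_mod_cast h1
  rw [cJ_eq, hCB, hch, poch_one, poch_two, poch_three, poch_half, poch_threehalf]
  have hfa : ((2*n+2).factorial : ℝ) = (2*(n:ℝ)+2)*((2*(n:ℝ))+1) * (2*n).factorial := by
    rw [show 2*n+2 = (2*n+1)+1 by ring, Nat.factorial_succ, show 2*n+1 = (2*n)+1 by ring,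
      Nat.factorial_succ]
    push_cast; ring
  have hfb : ((2*n+1).factorial : ℝ) = (2*(n:ℝ)+1) * (2*n).factorial := by
    rw [show 2*n+1 = (2*n)+1 by ring, Nat.factorial_succ]; push_cast; ring
  have hfc : ((n+1).factorial : ℝ) = ((n:ℝ)+1) * n.factorial := by
    rw [Nat.factorial_succ]; push_cast; ring
  have hfd : ((n+2).factorial : ℝ) = ((n:ℝ)+2)*((n:ℝ)+1) * n.factorial := by
    rw [show n+2 = (n+1)+1 by ring, Nat.factorial_succ, Nat.factorial_succ]; push_cast; ring
  rw [hfa, hfb, hfc, hfd]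
  have e1 : ((n.factorial : ℝ)) ≠ 0 := Nat.cast_ne_zero.2 (Nat.factorial_ne_zero _)
  have e2 : (((2*n).factorial : ℝ)) ≠ 0 := Nat.cast_ne_zero.2 (Nat.factorial_ne_zero _)
  have e3 : (4:ℝ)^n ≠ 0 := by positivity
  have e4 : ((n:ℝ)+1) ≠ 0 := by positivity
  have e5 : ((n:ℝ)+2) ≠ 0 := by positivity
  have e6 : (2*(n:ℝ)+1) ≠ 0 := by positivity
  field_simp

lemma two_besselJ_div {u : ℝ} (hu : u ≠ 0) :
    2 * besselJ 1 u / u = ∑' k : ℕ, aJ k * u ^ (2*k) := by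
  rw [besselJ_one_eq_tsum, ← tsum_mul_left, ← tsum_div_const]
  refine tsum_congr fun k => ?_
  rw [pow_succ]
  field_simp



/-- For every real `x`,
`(1/π) ∫₀^π (2J₁(x sin(θ/2))/(x sin(θ/2)))² dθ = ₂F₃(1/2, 3/2; 1, 2, 3; −x²)`,
with the integrand interpreted by continuity as `1` when `x = 0`. -/
theorem sidelobeIntegral_eq_hypergeometric (x : ℝ) :
    (1 / π) * (∫ θ in (0:ℝ)..π, (if x = 0 then (1:ℝ) else
        (2 * besselJ 1 (x * Real.sin (θ / 2)) / (x * Real.sin (θ / 2))) ^ 2))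
      = ∑' n : ℕ, (poch (1/2) n * poch (3/2) n / (poch 1 n * poch 2 n * poch 3 n))
          * (-x ^ 2) ^ n / (n.factorial : ℝ) := by
  rcases eq_or_ne x 0 with hx | hx
  · subst hx
    simp only [if_pos rfl, intervalIntegral.integral_const, smul_eq_mul, mul_one, sub_zero]
    rw [tsum_eq_single 0 (fun n hn => by
      rw [show (-(0:ℝ)^2)^n = 0 by rw [show (-(0:ℝ)^2) = 0 by norm_num, zero_pow hn]]
      ring)]
    simp [poch]
  · set h : ℕ → ℝ → ℝ := fun n θ => (cJ n * x^(2*n)) * Real.sin (θ/2)^(2*n) with hh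
    have hint : ∀ θ ∈ Set.Ioc (0:ℝ) π,
        (if x = 0 then (1:ℝ) else
          (2 * besselJ 1 (x * Real.sin (θ/2)) / (x * Real.sin (θ/2)))^2)
        = ∑' n, h n θ := by
      intro θ hθ
      rw [if_neg hx]
      have hs : 0 < Real.sin (θ/2) :=
        Real.sin_pos_of_pos_of_lt_pi (by linarith [hθ.1]) (by linarith [hθ.2, pi_pos])
      have hu : x * Real.sin (θ/2) ≠ 0 := mul_ne_zero hx (ne_of_gt hs)
      rw [two_besselJ_div hu, sq_eq_tsum]
      refine tsum_congr fun n => ?_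
      rw [hh, mul_pow]
      ring
    have hmeas : ∀ n, AEStronglyMeasurable (h n) (volume.restrict (Set.Ioc (0:ℝ) π)) := by
      intro n; apply Continuous.aestronglyMeasurable; rw [hh]; fun_prop
    have hbound : ∀ n θ, ‖h n θ‖ ≤ |cJ n * x^(2*n)| := by
      intro n θ
      rw [hh, norm_mul, Real.norm_eq_abs, Real.norm_eq_abs, abs_pow]
      refine (mul_le_mul_of_nonneg_left ?_ (abs_nonneg _)).trans (le_of_eq (mul_one _))
      exact pow_le_one₀ (abs_nonneg _) (Real.abs_sin_le_one _)
    have hlint : ∑' n, ∫⁻ θ in Set.Ioc (0:ℝ) π, ‖h n θ‖₊ ≠ ⊤ := by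
      have hb : ∀ n, ∫⁻ θ in Set.Ioc (0:ℝ) π, ‖h n θ‖₊
          ≤ ENNReal.ofReal (|cJ n * x^(2*n)| * π) := by
        intro n
        calc ∫⁻ θ in Set.Ioc (0:ℝ) π, ‖h n θ‖₊
            ≤ ∫⁻ _ in Set.Ioc (0:ℝ) π, ENNReal.ofReal (|cJ n * x^(2*n)|) := by
              refine lintegral_mono fun θ => ?_
              rw [← ENNReal.ofReal_coe_nnreal, coe_nnnorm]
              exact ENNReal.ofReal_le_ofReal (hbound n θ)
          _ = ENNReal.ofReal (|cJ n * x^(2*n)|) * ENNReal.ofReal π := by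
              rw [lintegral_const, Measure.restrict_apply MeasurableSet.univ, Set.univ_inter,
                Real.volume_Ioc, sub_zero]
          _ = ENNReal.ofReal (|cJ n * x^(2*n)| * π) := (ENNReal.ofReal_mul (abs_nonneg _)).symm
      refine ne_top_of_le_ne_top ?_ (ENNReal.tsum_le_tsum hb)
      rw [← ENNReal.ofReal_tsum_of_nonneg (fun n => mul_nonneg (abs_nonneg _) pi_pos.le)
        ((summable_cJ x).mul_right π)]
      exact ENNReal.ofReal_ne_top
    have hswap := MeasureTheory.integral_tsum hmeas hlint
    have hval : ∀ n : ℕ, (∫ θ in Set.Ioc (0:ℝ) π, h n θ)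
        = (cJ n * x^(2*n)) * (π * ((Nat.centralBinom n : ℝ) / 4^n)) := by
      intro n
      rw [← intervalIntegral.integral_of_le pi_pos.le, hh]
      rw [intervalIntegral.integral_const_mul, integral_sin_half_pow]
    calc (1 / π) * (∫ θ in (0:ℝ)..π, (if x = 0 then (1:ℝ) else
          (2 * besselJ 1 (x * Real.sin (θ / 2)) / (x * Real.sin (θ / 2))) ^ 2))
        = (1 / π) * ∑' n, (cJ n * x^(2*n)) * (π * ((Nat.centralBinom n : ℝ) / 4^n)) := by
          congr 1
          rw [intervalIntegral.integral_of_le pi_pos.le,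
            MeasureTheory.setIntegral_congr_fun measurableSet_Ioc hint, hswap]
          exact tsum_congr hval
      _ = ∑' n : ℕ, (poch (1/2) n * poch (3/2) n / (poch 1 n * poch 2 n * poch 3 n))
            * (-x ^ 2) ^ n / (n.factorial : ℝ) := by
          rw [← tsum_mul_left]
          refine tsum_congr fun n => ?_
          have hk := key n
          have hπ : (π:ℝ) ≠ 0 := pi_ne_zero
          have hxp : (-x^2)^n = (-1)^n * x^(2*n) := by
            rw [neg_pow, pow_mul]
          have hstep : (1/π) * ((cJ n * x^(2*n)) * (π * ((Nat.centralBinom n : ℝ)/4^n)))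
              = (cJ n * ((Nat.centralBinom n : ℝ)/4^n)) * x^(2*n) := by
            field_simp
          rw [hxp, hstep, hk]
          ring
end

section
/- Let N ≥ 1 be an integer, α ≠ 0 a real number, Z₁, …, Z_N i.i.d. random variables with the semicircle density, and φ₁, …, φ_N i.i.d. real random variables independent of (Z₁, …, Z_N). Then for the phase-perturbed array factor F = (1/N) Σ_{k=1}^N exp(−i α Z_k) · exp(i φ_k), the average beampattern satisfies E[|F|²] = 1/N + (1 − 1/N) · (2 J₁(α)/α)² · |E[exp(i φ₁)]|². -/
open MeasureTheory ProbabilityTheory Real Filter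

section Aux
open intervalIntegral

lemma step_a (x : ℝ) : (∫ θ in (0:ℝ)..π, Real.cos θ * Real.cos (x * Real.sin θ)) = 0 := by
  have h := intervalIntegral.integral_comp_sub_left
      (a := (0:ℝ)) (b := π) (fun θ => Real.cos θ * Real.cos (x * Real.sin θ)) π
  simp only [sub_zero, sub_self] at h
  have h2 : (∫ θ in (0:ℝ)..π, Real.cos (π - θ) * Real.cos (x * Real.sin (π - θ)))
      = ∫ θ in (0:ℝ)..π, -(Real.cos θ * Real.cos (x * Real.sin θ)) := by
    apply intervalIntegral.integral_congr
    intro θ _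
    simp [Real.cos_pi_sub, Real.sin_pi_sub]
  rw [h2, intervalIntegral.integral_neg] at h
  linarith

lemma step_b (x : ℝ) : (∫ θ in (0:ℝ)..π, Real.sin θ * Real.sin (x * Real.sin θ))
    = x * ∫ θ in (0:ℝ)..π, Real.cos θ ^ 2 * Real.cos (x * Real.sin θ) := by
  have hu : ∀ θ ∈ Set.uIcc (0:ℝ) π, HasDerivAt (fun θ => Real.sin (x * Real.sin θ))
      (Real.cos (x * Real.sin θ) * (x * Real.cos θ)) θ := by
    intro θ _
    exact (Real.hasDerivAt_sin (x * Real.sin θ)).comp θ ((Real.hasDerivAt_sin θ).const_mul x)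
  have hv : ∀ θ ∈ Set.uIcc (0:ℝ) π, HasDerivAt (fun θ => -Real.cos θ) (Real.sin θ) θ := by
    intro θ _
    simpa using (Real.hasDerivAt_cos θ).fun_neg
  have hiu : IntervalIntegrable (fun θ => Real.cos (x * Real.sin θ) * (x * Real.cos θ))
      volume 0 π := (Continuous.intervalIntegrable (by fun_prop) _ _)
  have hiv : IntervalIntegrable Real.sin volume 0 π :=
    (Continuous.intervalIntegrable (by fun_prop) _ _)
  have h := intervalIntegral.integral_mul_deriv_eq_deriv_mul hu hv hiu hiv
  simp only [Real.sin_pi, Real.sin_zero, mul_zero, zero_mul, Real.cos_pi, Real.cos_zero] at h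
  rw [show (∫ θ in (0:ℝ)..π, Real.sin (x * Real.sin θ) * Real.sin θ)
      = ∫ θ in (0:ℝ)..π, Real.sin θ * Real.sin (x * Real.sin θ) from
      intervalIntegral.integral_congr (fun θ _ => mul_comm _ _)] at h
  rw [h, ← intervalIntegral.integral_const_mul]
  have : (∫ θ in (0:ℝ)..π, Real.cos (x * Real.sin θ) * (x * Real.cos θ) * -Real.cos θ)
      = ∫ θ in (0:ℝ)..π, -(x * (Real.cos θ ^ 2 * Real.cos (x * Real.sin θ))) := by
    apply intervalIntegral.integral_congr; intro θ _; ring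
  rw [this, intervalIntegral.integral_neg]; ring

lemma sinSubst (x a b : ℝ) :
    (∫ θ in a..b, Real.cos θ • ((fun t => Real.sqrt (1 - t^2) * Real.cos (x * t)) ∘ Real.sin) θ)
      = ∫ t in Real.sin a..Real.sin b, Real.sqrt (1 - t^2) * Real.cos (x * t) := by
  apply intervalIntegral.integral_comp_smul_deriv
  · intro θ _; exact Real.hasDerivAt_sin θ
  · exact Real.continuousOn_cos
  · fun_prop

lemma sqrt_one_sub_sin_sq (θ : ℝ) : Real.sqrt (1 - Real.sin θ ^ 2) = |Real.cos θ| := by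
  rw [show (1 : ℝ) - Real.sin θ ^ 2 = Real.cos θ ^ 2 by
    have := Real.sin_sq_add_cos_sq θ; linarith, Real.sqrt_sq_eq_abs]

lemma step_c (x : ℝ) : (∫ θ in (0:ℝ)..π, Real.cos θ ^ 2 * Real.cos (x * Real.sin θ))
    = ∫ t in (-1:ℝ)..1, Real.sqrt (1 - t^2) * Real.cos (x * t) := by
  set g : ℝ → ℝ := fun t => Real.sqrt (1 - t^2) * Real.cos (x * t) with hg
  have h1 : (∫ θ in (0:ℝ)..(π/2), Real.cos θ ^ 2 * Real.cos (x * Real.sin θ))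
      = ∫ t in (0:ℝ)..1, g t := by
    have := sinSubst x 0 (π/2)
    simp only [Real.sin_zero, Real.sin_pi_div_two] at this
    rw [← this]
    apply intervalIntegral.integral_congr
    intro θ hθ
    rw [Set.uIcc_of_le (by positivity)] at hθ
    have hc : 0 ≤ Real.cos θ := Real.cos_nonneg_of_mem_Icc
      ⟨by linarith [hθ.1, pi_pos.le], hθ.2⟩
    simp only [Function.comp, smul_eq_mul, sqrt_one_sub_sin_sq, abs_of_nonneg hc]
    ring
  have h2 : (∫ θ in (π/2:ℝ)..π, Real.cos θ ^ 2 * Real.cos (x * Real.sin θ))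
      = ∫ t in (0:ℝ)..1, g t := by
    have := sinSubst x (π/2) π
    simp only [Real.sin_pi, Real.sin_pi_div_two] at this
    have hcong : (∫ θ in (π/2:ℝ)..π, Real.cos θ ^ 2 * Real.cos (x * Real.sin θ))
        = ∫ θ in (π/2:ℝ)..π,
            -(Real.cos θ • ((fun t => Real.sqrt (1 - t^2) * Real.cos (x * t)) ∘ Real.sin) θ) := by
      apply intervalIntegral.integral_congr
      intro θ hθ
      rw [Set.uIcc_of_le (by linarith [pi_pos])] at hθ
      have hc : Real.cos θ ≤ 0 := Real.cos_nonpos_of_pi_div_two_le_of_le hθ.1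
        (by linarith [pi_pos, hθ.2])
      simp only [Function.comp, smul_eq_mul, sqrt_one_sub_sin_sq, abs_of_nonpos hc]
      ring
    rw [hcong, intervalIntegral.integral_neg, this,
      intervalIntegral.integral_symm (a := (0:ℝ)) (b := 1), neg_neg]
  have hsplit : (∫ θ in (0:ℝ)..π, Real.cos θ ^ 2 * Real.cos (x * Real.sin θ))
      = (∫ θ in (0:ℝ)..(π/2), Real.cos θ ^ 2 * Real.cos (x * Real.sin θ))
        + ∫ θ in (π/2:ℝ)..π, Real.cos θ ^ 2 * Real.cos (x * Real.sin θ) := by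
    rw [intervalIntegral.integral_add_adjacent_intervals] <;>
      exact Continuous.intervalIntegrable (by fun_prop) _ _
  have heven : (∫ t in (-1:ℝ)..1, g t) = (∫ t in (-1:ℝ)..0, g t) + ∫ t in (0:ℝ)..1, g t := by
    rw [intervalIntegral.integral_add_adjacent_intervals] <;>
      exact Continuous.intervalIntegrable (by fun_prop) _ _
  have hneg : (∫ t in (-1:ℝ)..0, g t) = ∫ t in (0:ℝ)..1, g t := by
    rw [show (∫ t in (0:ℝ)..1, g t) = ∫ t in (0:ℝ)..1, g (-t) from
      intervalIntegral.integral_congr (fun t _ => by simp [hg, neg_sq, mul_neg, Real.cos_neg]),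
      intervalIntegral.integral_comp_neg]
    norm_num
  rw [hsplit, h1, h2, heven, hneg]

lemma besselJ_one (x : ℝ) :
    besselJ 1 x = (x / π) * ∫ t in (-1:ℝ)..1, Real.sqrt (1 - t^2) * Real.cos (x * t) := by
  have hexp : (∫ θ in (0:ℝ)..π, Real.cos ((1:ℝ) * θ - x * Real.sin θ))
      = (∫ θ in (0:ℝ)..π, Real.cos θ * Real.cos (x * Real.sin θ))
        + ∫ θ in (0:ℝ)..π, Real.sin θ * Real.sin (x * Real.sin θ) := by
    rw [← intervalIntegral.integral_add (Continuous.intervalIntegrable (by fun_prop) _ _)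
      (Continuous.intervalIntegrable (by fun_prop) _ _)]
    apply intervalIntegral.integral_congr
    intro θ _
    simp only []
    rw [one_mul, Real.cos_sub]
  rw [besselJ, Nat.cast_one, hexp, step_a, step_b, step_c]
  ring

lemma odd_integral_zero_s15 {h : ℝ → ℝ} (hc : Continuous h) (hodd : ∀ t, h (-t) = -h t) :
    (∫ t in (-1:ℝ)..1, h t) = 0 := by
  have hsplit : (∫ t in (-1:ℝ)..1, h t) = (∫ t in (-1:ℝ)..0, h t) + ∫ t in (0:ℝ)..1, h t := by
    rw [intervalIntegral.integral_add_adjacent_intervals] <;>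
      exact Continuous.intervalIntegrable hc _ _
  have hneg : (∫ t in (-1:ℝ)..0, h t) = -∫ t in (0:ℝ)..1, h t := by
    rw [← intervalIntegral.integral_neg,
      show (∫ t in (0:ℝ)..1, -h t) = ∫ t in (0:ℝ)..1, h (-t) from
        intervalIntegral.integral_congr (fun t _ => (hodd t).symm),
      intervalIntegral.integral_comp_neg]
    norm_num
  rw [hsplit, hneg]; ring

lemma semicircle_char (x : ℝ) (hx : x ≠ 0) :
    (∫ z : ℝ, Complex.exp (Complex.I * x * z) ∂semicircleMeasure)
      = ((2 * besselJ 1 x / x : ℝ) : ℂ) := by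
  set dens : ℝ → ℝ := fun z => if z ∈ Set.Icc (-1 : ℝ) 1 then (2 / π) * Real.sqrt (1 - z ^ 2) else 0
    with hdens
  have hdmeas : Measurable (fun z => Real.toNNReal (dens z)) := by
    apply Measurable.real_toNNReal
    exact Measurable.ite measurableSet_Icc (by fun_prop) measurable_const
  have h0 : (∫ z : ℝ, Complex.exp (Complex.I * x * z) ∂semicircleMeasure)
      = ∫ z : ℝ, Real.toNNReal (dens z) • Complex.exp (Complex.I * x * z) := by
    exact integral_withDensity_eq_integral_smul hdmeas _
  rw [h0]
  have h1 : (fun z : ℝ => Real.toNNReal (dens z) • Complex.exp (Complex.I * x * z))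
      = Set.indicator (Set.Icc (-1:ℝ) 1)
          (fun z => Real.toNNReal (dens z) • Complex.exp (Complex.I * x * z)) := by
    funext z
    by_cases hz : z ∈ Set.Icc (-1:ℝ) 1
    · rw [Set.indicator_of_mem hz]
    · rw [Set.indicator_of_notMem hz]
      have hdz : dens z = 0 := by rw [hdens]; exact if_neg hz
      simp [hdz]
  rw [h1, MeasureTheory.integral_indicator measurableSet_Icc, integral_Icc_eq_integral_Ioc,
    ← intervalIntegral.integral_of_le (by norm_num : (-1:ℝ) ≤ 1)]
  have h2 : (∫ z in (-1:ℝ)..1, Real.toNNReal (dens z) • Complex.exp (Complex.I * x * z))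
      = ∫ z in (-1:ℝ)..1,
          (((2 / π) * Real.sqrt (1 - z ^ 2) * Real.cos (x * z) : ℝ) : ℂ)
            + (((2 / π) * Real.sqrt (1 - z ^ 2) * Real.sin (x * z) : ℝ) : ℂ) * Complex.I := by
    apply intervalIntegral.integral_congr
    intro z hz
    rw [Set.uIcc_of_le (by norm_num : (-1:ℝ) ≤ 1)] at hz
    have hnn : 0 ≤ dens z := by
      rw [hdens]; simp only [hz, if_true]
      positivity
    simp only [NNReal.smul_def]
    rw [Real.coe_toNNReal _ hnn, hdens]
    simp only [hz, if_true]
    have hIz : Complex.I * x * z = ((x * z : ℝ) : ℂ) * Complex.I := by push_cast; ring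
    rw [Complex.real_smul, hIz, Complex.exp_mul_I, ← Complex.ofReal_cos, ← Complex.ofReal_sin]
    push_cast
    ring
  rw [h2, intervalIntegral.integral_add (Continuous.intervalIntegrable (by fun_prop) _ _)
    (Continuous.intervalIntegrable (by fun_prop) _ _),
    intervalIntegral.integral_mul_const, intervalIntegral.integral_ofReal,
    intervalIntegral.integral_ofReal]
  have hsin : (∫ z in (-1:ℝ)..1, (2 / π) * Real.sqrt (1 - z ^ 2) * Real.sin (x * z)) = 0 := by
    apply odd_integral_zero_s15 (by fun_prop)
    intro t
    simp [neg_sq, mul_neg, Real.sin_neg]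
  have hcos : (∫ z in (-1:ℝ)..1, (2 / π) * Real.sqrt (1 - z ^ 2) * Real.cos (x * z))
      = 2 * besselJ 1 x / x := by
    have : (∫ z in (-1:ℝ)..1, (2 / π) * Real.sqrt (1 - z ^ 2) * Real.cos (x * z))
        = (2 / π) * ∫ z in (-1:ℝ)..1, Real.sqrt (1 - z ^ 2) * Real.cos (x * z) := by
      rw [← intervalIntegral.integral_const_mul]
      apply intervalIntegral.integral_congr
      intro z _; ring
    rw [this]
    rw [besselJ_one]
    generalize (∫ t in (-1:ℝ)..1, Real.sqrt (1 - t^2) * Real.cos (x * t)) = I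
    field_simp
  rw [hsin, hcos]
  simp

open ProbabilityTheory in
lemma indep_integral_mul {Ω : Type*} [MeasurableSpace Ω] {μ : Measure Ω} [IsProbabilityMeasure μ]
    {X Y : Ω → ℂ} (h : IndepFun X Y μ) (hX : AEMeasurable X μ) (hY : AEMeasurable Y μ) :
    ∫ ω, X ω * Y ω ∂μ = (∫ ω, X ω ∂μ) * ∫ ω, Y ω ∂μ := by
  have hmap := (ProbabilityTheory.indepFun_iff_map_prod_eq_prod_map_map hX hY).mp h
  have h1 : ∫ ω, X ω * Y ω ∂μ
      = ∫ q : ℂ × ℂ, q.1 * q.2 ∂(Measure.map (fun ω => (X ω, Y ω)) μ) := by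
    rw [integral_map (hX.prodMk hY)
      (by fun_prop : Measurable fun q : ℂ × ℂ => q.1 * q.2).aestronglyMeasurable]
  rw [h1, hmap,
    integral_prod_mul (μ := Measure.map X μ) (ν := Measure.map Y μ)
      (f := fun x => x) (g := fun x => x),
    show (∫ x : ℂ, (fun y => y) x ∂Measure.map X μ) = _ from
      integral_map hX measurable_id.aestronglyMeasurable,
    show (∫ x : ℂ, (fun y => y) x ∂Measure.map Y μ) = _ from
      integral_map hY measurable_id.aestronglyMeasurable]

lemma integrable_of_bound {Ω : Type*} [MeasurableSpace Ω] {μ : Measure Ω}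
    [IsProbabilityMeasure μ] {f : Ω → ℂ} (hm : AEStronglyMeasurable f μ)
    (hb : ∀ ω, ‖f ω‖ ≤ 1) : Integrable f μ :=
  (integrable_const (1:ℝ)).mono' hm (Filter.Eventually.of_forall fun ω => by
    simpa using hb ω)

lemma abs_exp_I_mul (r : ℝ) : ‖Complex.exp (Complex.I * r)‖ = 1 := by
  simp [Complex.norm_exp]

lemma besselJ_one_neg (x : ℝ) : besselJ 1 (-x) = - besselJ 1 x := by
  rw [besselJ_one, besselJ_one]
  rw [show (∫ t in (-1:ℝ)..1, Real.sqrt (1 - t^2) * Real.cos (-x * t))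
      = ∫ t in (-1:ℝ)..1, Real.sqrt (1 - t^2) * Real.cos (x * t) from
    intervalIntegral.integral_congr (fun t _ => by rw [neg_mul, Real.cos_neg])]
  ring

end Aux

/-- For i.i.d. semicircle `Z₁,…,Z_N`, i.i.d. phase jitters `φ₁,…,φ_N` (with common
law `ν`) jointly independent of the `Z`'s, the phase-perturbed array factor
`F = (1/N) Σₖ exp(−iαZₖ) exp(iφₖ)` satisfies
`E[|F|²] = 1/N + (1 − 1/N)(2J₁(α)/α)²·|E[exp(iφ₁)]|²`. -/
theorem average_beampattern_phase_jitter {Ω : Type*} [MeasurableSpace Ω]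
    (μ : Measure Ω) [IsProbabilityMeasure μ]
    (N : ℕ) (hN : 1 ≤ N) (α : ℝ) (hα : α ≠ 0)
    (ν : Measure ℝ) [IsProbabilityMeasure ν]
    (Z φ : Fin N → Ω → ℝ)
    (hmZ : ∀ k, Measurable (Z k)) (hmφ : ∀ k, Measurable (φ k))
    (hindep : iIndepFun
      (Sum.elim Z φ : Fin N ⊕ Fin N → Ω → ℝ) μ)
    (hZ : ∀ k, Measure.map (Z k) μ = semicircleMeasure)
    (hφ : ∀ k, Measure.map (φ k) μ = ν) :
    ∫ ω, ‖(1 / (N : ℂ)) * ∑ k : Fin N,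
        Complex.exp (-(Complex.I * α * Z k ω)) * Complex.exp (Complex.I * φ k ω)‖ ^ 2 ∂μ
      = 1 / N + (1 - 1 / (N : ℝ)) * (2 * besselJ 1 α / α) ^ 2
          * ‖∫ x : ℝ, Complex.exp (Complex.I * x) ∂ν‖ ^ 2 := by
  have hNR : (N : ℝ) ≠ 0 := Nat.cast_ne_zero.mpr (by omega)
  set c : ℝ := 2 * besselJ 1 α / α with hc
  set p : ℂ := ∫ x : ℝ, Complex.exp (Complex.I * x) ∂ν with hp
  set A : Fin N → Ω → ℂ := fun k ω =>
    Complex.exp (-(Complex.I * α * Z k ω)) * Complex.exp (Complex.I * φ k ω) with hA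
  -- basic facts
  have hrw : ∀ (r : ℝ) (z : ℝ), -(Complex.I * r * z) = Complex.I * ((-(r * z) : ℝ) : ℂ) := by
    intro r z; push_cast; ring
  have habsA : ∀ k ω, ‖A k ω‖ = 1 := by
    intro k ω
    rw [hA]
    simp only [norm_mul]
    rw [show -(Complex.I * α * Z k ω) = Complex.I * ((-(α * Z k ω) : ℝ) : ℂ) from hrw α _]
    rw [abs_exp_I_mul, abs_exp_I_mul, one_mul]
  have hmA : ∀ k, Measurable (A k) := by
    intro k
    apply Measurable.mul
    · exact Complex.measurable_exp.comp
        (((Complex.measurable_ofReal.comp (hmZ k)).const_mul _).neg)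
    · exact Complex.measurable_exp.comp ((Complex.measurable_ofReal.comp (hmφ k)).const_mul _)
  have hmSum : ∀ i : Fin N ⊕ Fin N, Measurable (Sum.elim Z φ i) := by
    rintro (a | a)
    exacts [hmZ a, hmφ a]
  -- expectations of individual exponentials
  have hEZneg : ∀ k, (∫ ω, Complex.exp (-(Complex.I * α * Z k ω)) ∂μ) = (c : ℂ) := by
    intro k
    have h1 : (fun ω => Complex.exp (-(Complex.I * α * Z k ω)))
        = fun ω => Complex.exp (Complex.I * ((-α : ℝ) : ℂ) * Z k ω) := by
      funext ω; congr 1; push_cast; ring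
    rw [h1, ← integral_map (hmZ k).aemeasurable
        (by fun_prop : Measurable fun z : ℝ =>
          Complex.exp (Complex.I * ((-α : ℝ) : ℂ) * z)).aestronglyMeasurable,
      hZ k, semicircle_char (-α) (neg_ne_zero.mpr hα), besselJ_one_neg]
    rw [hc]
    norm_num
  have hEZpos : ∀ k, (∫ ω, Complex.exp (Complex.I * α * Z k ω) ∂μ) = (c : ℂ) := by
    intro k
    rw [← integral_map (hmZ k).aemeasurable
        (by fun_prop : Measurable fun z : ℝ =>
          Complex.exp (Complex.I * (α : ℂ) * z)).aestronglyMeasurable,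
      hZ k, semicircle_char α hα]
  have hEφpos : ∀ k, (∫ ω, Complex.exp (Complex.I * φ k ω) ∂μ) = p := by
    intro k
    rw [← integral_map (hmφ k).aemeasurable
        (by fun_prop : Measurable fun z : ℝ =>
          Complex.exp (Complex.I * z)).aestronglyMeasurable, hφ k]
  have hEφneg : ∀ k, (∫ ω, Complex.exp (-(Complex.I * φ k ω)) ∂μ) = starRingEnd ℂ p := by
    intro k
    rw [← integral_map (hmφ k).aemeasurable
        (by fun_prop : Measurable fun z : ℝ =>
          Complex.exp (-(Complex.I * z))).aestronglyMeasurable, hφ k]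
    rw [hp, ← integral_conj]
    have h1 : (fun z : ℝ => Complex.exp (-(Complex.I * z)))
        = fun z : ℝ => starRingEnd ℂ (Complex.exp (Complex.I * z)) := by
      funext z
      rw [← Complex.exp_conj, map_mul, Complex.conj_I, Complex.conj_ofReal]
      ring_nf
    rw [h1]
  -- value of the cross terms
  have hterm : ∀ j k : Fin N, j ≠ k →
      (∫ ω, A j ω * starRingEnd ℂ (A k ω) ∂μ) = ((c : ℂ) * p) * ((c : ℂ) * starRingEnd ℂ p) := by
    intro j k hjk
    have hpair : IndepFun (fun ω => (Z j ω, φ j ω)) (fun ω => (Z k ω, φ k ω)) μ := by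
      have := hindep.indepFun_prodMk_prodMk hmSum
        (Sum.inl j) (Sum.inr j) (Sum.inl k) (Sum.inr k)
        (by simp [hjk]) (by simp) (by simp) (by simp [hjk])
      exact this
    set F : ℝ × ℝ → ℂ := fun q =>
      Complex.exp (-(Complex.I * α * q.1)) * Complex.exp (Complex.I * q.2) with hF
    set G : ℝ × ℝ → ℂ := fun q =>
      Complex.exp (Complex.I * α * q.1) * Complex.exp (-(Complex.I * q.2)) with hG
    have hFm : Measurable F := by
      apply Measurable.mul
      · exact Complex.measurable_exp.comp
          (((Complex.measurable_ofReal.comp measurable_fst).const_mul _).neg)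
      · exact Complex.measurable_exp.comp
          ((Complex.measurable_ofReal.comp measurable_snd).const_mul _)
    have hGm : Measurable G := by
      apply Measurable.mul
      · exact Complex.measurable_exp.comp
          ((Complex.measurable_ofReal.comp measurable_fst).const_mul _)
      · exact Complex.measurable_exp.comp
          (((Complex.measurable_ofReal.comp measurable_snd).const_mul _).neg)
    have hFG : IndepFun (fun ω => F (Z j ω, φ j ω)) (fun ω => G (Z k ω, φ k ω)) μ :=
      hpair.comp hFm hGm
    have hconj : ∀ ω, A j ω * starRingEnd ℂ (A k ω) = F (Z j ω, φ j ω) * G (Z k ω, φ k ω) := by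
      intro ω
      have e1 : starRingEnd ℂ (-(Complex.I * (α : ℂ) * ((Z k ω : ℝ) : ℂ)))
          = Complex.I * (α : ℂ) * ((Z k ω : ℝ) : ℂ) := by
        rw [map_neg, map_mul, map_mul, Complex.conj_I, Complex.conj_ofReal,
          Complex.conj_ofReal]
        ring
      have e2 : starRingEnd ℂ (Complex.I * ((φ k ω : ℝ) : ℂ))
          = -(Complex.I * ((φ k ω : ℝ) : ℂ)) := by
        rw [map_mul, Complex.conj_I, Complex.conj_ofReal]
        ring
      simp only [hA, hF, hG, map_mul, ← Complex.exp_conj, e1, e2]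
    have h1 : (∫ ω, A j ω * starRingEnd ℂ (A k ω) ∂μ)
        = ∫ ω, F (Z j ω, φ j ω) * G (Z k ω, φ k ω) ∂μ :=
      integral_congr_ae (Eventually.of_forall hconj)
    rw [h1, indep_integral_mul hFG
      ((hFm.comp ((hmZ j).prodMk (hmφ j))).aemeasurable)
      ((hGm.comp ((hmZ k).prodMk (hmφ k))).aemeasurable)]
    -- now split each factor
    have hZφj : IndepFun (Z j) (φ j) μ := hindep.indepFun (by simp : Sum.inl j ≠ Sum.inr j)
    have hZφk : IndepFun (Z k) (φ k) μ := hindep.indepFun (by simp : Sum.inl k ≠ Sum.inr k)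
    have hFsplit : (∫ ω, F (Z j ω, φ j ω) ∂μ) = (c : ℂ) * p := by
      have hcomp : IndepFun (fun ω => Complex.exp (-(Complex.I * α * Z j ω)))
          (fun ω => Complex.exp (Complex.I * φ j ω)) μ := by
        have := hZφj.comp
          (by fun_prop : Measurable fun z : ℝ => Complex.exp (-(Complex.I * α * z)))
          (by fun_prop : Measurable fun t : ℝ => Complex.exp (Complex.I * t))
        exact this
      rw [show (∫ ω, F (Z j ω, φ j ω) ∂μ) = ∫ ω, Complex.exp (-(Complex.I * α * Z j ω))
          * Complex.exp (Complex.I * φ j ω) ∂μ from rfl,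
        indep_integral_mul hcomp (by fun_prop) (by fun_prop), hEZneg j, hEφpos j]
    have hGsplit : (∫ ω, G (Z k ω, φ k ω) ∂μ) = (c : ℂ) * starRingEnd ℂ p := by
      have hcomp : IndepFun (fun ω => Complex.exp (Complex.I * α * Z k ω))
          (fun ω => Complex.exp (-(Complex.I * φ k ω))) μ := by
        have := hZφk.comp
          (by fun_prop : Measurable fun z : ℝ => Complex.exp (Complex.I * α * z))
          (by fun_prop : Measurable fun t : ℝ => Complex.exp (-(Complex.I * t)))
        exact this
      rw [show (∫ ω, G (Z k ω, φ k ω) ∂μ) = ∫ ω, Complex.exp (Complex.I * α * Z k ω)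
          * Complex.exp (-(Complex.I * φ k ω)) ∂μ from rfl,
        indep_integral_mul hcomp (by fun_prop) (by fun_prop), hEZpos k, hEφneg k]
    rw [hFsplit, hGsplit]
  -- diagonal terms
  have hdiag : ∀ j : Fin N, (∫ ω, A j ω * starRingEnd ℂ (A j ω) ∂μ) = 1 := by
    intro j
    have h1 : (fun ω => A j ω * starRingEnd ℂ (A j ω)) = fun _ => (1 : ℂ) := by
      funext ω
      rw [Complex.mul_conj, ← Complex.sq_norm, habsA]
      norm_num
    rw [h1, integral_const]
    simp
  set Xc : ℂ := ((c : ℂ) * p) * ((c : ℂ) * starRingEnd ℂ p) with hXc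
  have htermint : ∀ j k : Fin N, Integrable (fun ω => A j ω * starRingEnd ℂ (A k ω)) μ := by
    intro j k
    apply integrable_of_bound ((hmA j).mul (Complex.continuous_conj.measurable.comp (hmA k))).aestronglyMeasurable
    intro ω
    simp only [Pi.mul_apply, Function.comp_apply]
    rw [norm_mul, Complex.norm_conj, habsA, habsA, one_mul]
  -- the sum over all pairs
  have hsum : (∑ j : Fin N, ∑ k : Fin N, ∫ ω, A j ω * starRingEnd ℂ (A k ω) ∂μ)
      = (N : ℂ) * (((N : ℂ) - 1) * Xc + 1) := by
    have hinner : ∀ j : Fin N, (∑ k : Fin N, ∫ ω, A j ω * starRingEnd ℂ (A k ω) ∂μ)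
        = ((N : ℂ) - 1) * Xc + 1 := by
      intro j
      have h1 : ∀ k : Fin N, (∫ ω, A j ω * starRingEnd ℂ (A k ω) ∂μ)
          = Xc + (if j = k then 1 - Xc else 0) := by
        intro k
        by_cases h : j = k
        · subst h; rw [hdiag j, if_pos rfl]; ring
        · rw [hterm j k h, if_neg h, hXc]; ring
      rw [Finset.sum_congr rfl (fun k _ => h1 k), Finset.sum_add_distrib,
        Finset.sum_const, Finset.sum_ite_eq, if_pos (Finset.mem_univ j),
        Finset.card_univ, Fintype.card_fin, nsmul_eq_mul]
      ring
    rw [Finset.sum_congr rfl (fun j _ => hinner j), Finset.sum_const,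
      Finset.card_univ, Fintype.card_fin, nsmul_eq_mul]
  -- bound on the array factor
  have hwle : ∀ ω, ‖(1 / (N : ℂ)) * ∑ k : Fin N, A k ω‖ ≤ 1 := by
    intro ω
    rw [norm_mul]
    have h1 : ‖1 / (N : ℂ)‖ = 1 / (N : ℝ) := by
      rw [norm_div, norm_one, Complex.norm_natCast]
    have h2 : ‖∑ k : Fin N, A k ω‖ ≤ (N : ℝ) := by
      calc ‖∑ k : Fin N, A k ω‖ ≤ ∑ k : Fin N, ‖A k ω‖ :=
            norm_sum_le _ _
        _ = (N : ℝ) := by simp [habsA]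
    rw [h1]
    calc (1 / (N : ℝ)) * ‖∑ k : Fin N, A k ω‖
        ≤ (1 / (N : ℝ)) * (N : ℝ) := by
          apply mul_le_mul_of_nonneg_left h2 (by positivity)
      _ = 1 := by field_simp
  have hmw : Measurable (fun ω => (1 / (N : ℂ)) * ∑ k : Fin N, A k ω) := by
    exact (Finset.measurable_sum _ (fun k _ => hmA k)).const_mul _
  -- integrability of |w|²-type integrand
  have hGint : Integrable (fun ω => ((1 / (N : ℂ)) * ∑ k : Fin N, A k ω)
      * starRingEnd ℂ ((1 / (N : ℂ)) * ∑ k : Fin N, A k ω)) μ := by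
    apply integrable_of_bound (hmw.mul (Complex.continuous_conj.measurable.comp hmw)).aestronglyMeasurable
    intro ω
    simp only [Pi.mul_apply, Function.comp_apply]
    rw [norm_mul, Complex.norm_conj]
    calc ‖(1 / (N : ℂ)) * ∑ k : Fin N, A k ω‖
          * ‖(1 / (N : ℂ)) * ∑ k : Fin N, A k ω‖
        ≤ 1 * 1 := mul_le_mul (hwle ω) (hwle ω) (by positivity) one_pos.le
      _ = 1 := one_mul 1
  -- compute the integral of w * conj w
  have hGval : (∫ ω, ((1 / (N : ℂ)) * ∑ k : Fin N, A k ω)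
      * starRingEnd ℂ ((1 / (N : ℂ)) * ∑ k : Fin N, A k ω) ∂μ)
      = (1 / (N : ℂ))^2 * ((N : ℂ) * (((N : ℂ) - 1) * Xc + 1)) := by
    have hexp : (fun ω => ((1 / (N : ℂ)) * ∑ k : Fin N, A k ω)
        * starRingEnd ℂ ((1 / (N : ℂ)) * ∑ k : Fin N, A k ω))
        = fun ω => (1 / (N : ℂ))^2
            * ∑ j : Fin N, ∑ k : Fin N, A j ω * starRingEnd ℂ (A k ω) := by
      funext ω
      rw [map_mul, map_sum]
      rw [show starRingEnd ℂ (1 / (N : ℂ)) = 1 / (N : ℂ) by simp]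
      rw [← Finset.sum_mul_sum]
      ring
    rw [hexp, integral_const_mul,
      integral_finset_sum _ (fun j _ => integrable_finset_sum _ (fun k _ => htermint j k)),
      Finset.sum_congr rfl (fun j _ => integral_finset_sum _ (fun k _ => htermint j k)),
      hsum]
  -- real form of Xc
  have hXcre : Xc = (((c ^ 2 * Complex.normSq p : ℝ)) : ℂ) := by
    rw [hXc, show ((c : ℂ) * p) * ((c : ℂ) * starRingEnd ℂ p)
        = ((c : ℂ) * (c : ℂ)) * (p * starRingEnd ℂ p) by ring, Complex.mul_conj]
    push_cast
    ring
  -- conclude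
  have hLHS : (∫ ω, ‖(1 / (N : ℂ)) * ∑ k : Fin N,
        Complex.exp (-(Complex.I * α * Z k ω)) * Complex.exp (Complex.I * φ k ω)‖ ^ 2 ∂μ)
      = ∫ ω, RCLike.re (((1 / (N : ℂ)) * ∑ k : Fin N, A k ω)
          * starRingEnd ℂ ((1 / (N : ℂ)) * ∑ k : Fin N, A k ω)) ∂μ := by
    apply integral_congr_ae
    apply Eventually.of_forall
    intro ω
    beta_reduce
    rw [RCLike.re_to_complex, Complex.mul_conj, Complex.ofReal_re, Complex.sq_norm]
  rw [hLHS, integral_re hGint, hGval, hXcre]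
  have hcast : (1 / (N : ℂ))^2 * ((N : ℂ) * (((N : ℂ) - 1)
        * (((c ^ 2 * Complex.normSq p : ℝ)) : ℂ) + 1))
      = ((((1 / (N : ℝ))^2 * ((N : ℝ) * (((N : ℝ) - 1) * (c ^ 2 * Complex.normSq p) + 1))
          : ℝ)) : ℂ) := by
    push_cast
    ring
  rw [hcast, RCLike.re_to_complex, Complex.ofReal_re]
  rw [show ‖p‖ ^ 2 = Complex.normSq p from Complex.sq_norm p]
  have hN1 : (1 : ℝ) ≤ (N : ℝ) := by exact_mod_cast hN
  field_simp
  ring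
end
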